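/- arXiv:2007.09235 — 11 statements merged into one kernel-verified Lean document; each statement's English description precedes it below -/
import Mathlib

section
/- If H is an n×n real matrix with entries ±1 and H^T H = nI (a Hadamard matrix) with n ≥ 3, then n is divisible by 4. -/
open Matrix

def IsHadamardMatrix {n : ℕ} (H : Matrix (Fin n) (Fin n) ℝ) : Prop :=
  (∀ i j, H i j = 1 ∨ H i j = -1) ∧ Hᵀ * H = (n : ℝ) • 1

open scoped Classical in
noncomputable def lap {n : ℕ} (G : SimpleGraph (Fin n)) : Matrix (Fin n) (Fin n) ℝ :=
  G.lapMatrix ℝ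

def HadamardDiagonalizable {n : ℕ} (G : SimpleGraph (Fin n)) : Prop :=
  ∃ (H : Matrix (Fin n) (Fin n) ℝ) (Λ : Fin n → ℝ),
    IsHadamardMatrix H ∧ lap G = (n : ℝ)⁻¹ • (H * Matrix.diagonal Λ * Hᵀ)

theorem hadamard_order_div_four {n : ℕ} (H : Matrix (Fin n) (Fin n) ℝ)
    (hH : IsHadamardMatrix H) (hn : 3 ≤ n) : 4 ∣ n := by
  classical
  obtain ⟨hpm, horth⟩ := hH
  have key : ∀ j k : Fin n, ∑ i, H i j * H i k = if j = k then (n : ℝ) else 0 := by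
    intro j k
    have h := congrFun (congrFun horth j) k
    simpa [Matrix.mul_apply, Matrix.transpose_apply, Matrix.one_apply,
      Matrix.smul_apply, mul_ite, mul_one, mul_zero] using h
  set e0 : Fin n := ⟨0, by omega⟩ with he0
  set e1 : Fin n := ⟨1, by omega⟩ with he1
  set e2 : Fin n := ⟨2, by omega⟩ with he2
  have h01 : e0 ≠ e1 := by simp [he0, he1, Fin.ext_iff]
  have h02 : e0 ≠ e2 := by simp [he0, he2, Fin.ext_iff]
  have h12 : e1 ≠ e2 := by simp [he1, he2, Fin.ext_iff]
  have h10 : e1 ≠ e0 := h01.symm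
  set f : Fin n → ℝ := fun i => (H i e0 + H i e1) * (H i e0 + H i e2) with hf
  have hsum : ∑ i, f i = (n : ℝ) := by
    have expand : ∀ i : Fin n, f i =
        H i e0 * H i e0 + H i e0 * H i e2 + H i e1 * H i e0 + H i e1 * H i e2 := by
      intro i; simp only [hf]; ring
    rw [Finset.sum_congr rfl (fun i _ => expand i)]
    rw [Finset.sum_add_distrib, Finset.sum_add_distrib, Finset.sum_add_distrib]
    rw [key e0 e0, key e0 e2, key e1 e0, key e1 e2]
    simp [h02, h10, h12]
  have hterm : ∀ i, f i = 0 ∨ f i = 4 := by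
    intro i
    rcases hpm i e0 with h0 | h0 <;> rcases hpm i e1 with h1 | h1 <;>
      rcases hpm i e2 with h2 | h2 <;> simp [hf, h0, h1, h2] <;> norm_num
  set s : Finset (Fin n) := Finset.univ.filter (fun i => f i = 4) with hs
  have hsum2 : ∑ i, f i = 4 * s.card := by
    rw [← Finset.sum_subset (Finset.subset_univ s) (by
      intro i _ hi
      rcases hterm i with h | h
      · exact h
      · exact absurd (Finset.mem_filter.mpr ⟨Finset.mem_univ i, h⟩) hi)]
    rw [Finset.sum_congr rfl (fun i hi => (Finset.mem_filter.mp hi).2)]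
    simp [mul_comm]
    convert rfl
  have : (n : ℝ) = 4 * s.card := by rw [← hsum, hsum2]
  have hnat : n = 4 * s.card := by exact_mod_cast this
  exact ⟨s.card, hnat⟩
end

section
/- If a graph G is Hadamard diagonalizable, then G is regular, i.e., all vertices have the same degree. -/
open Matrix

lemma lap_diag {n : ℕ} (G : SimpleGraph (Fin n)) [DecidableRel G.Adj] (u : Fin n) :
    lap G u u = (G.degree u : ℝ) := by
  classical
  simp [lap, SimpleGraph.lapMatrix, SimpleGraph.degMatrix, Matrix.sub_apply]
  convert rfl

theorem hadamardDiagonalizable_regular {n : ℕ} (G : SimpleGraph (Fin n))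
    [DecidableRel G.Adj] (hG : HadamardDiagonalizable G) :
    ∀ u v : Fin n, G.degree u = G.degree v := by
  obtain ⟨H, Λ, ⟨hpm, _⟩, hL⟩ := hG
  have key : ∀ u : Fin n, (G.degree u : ℝ) = (n : ℝ)⁻¹ * ∑ k, Λ k := by
    intro u
    have h1 : lap G u u = (n : ℝ)⁻¹ * (H * Matrix.diagonal Λ * Hᵀ) u u := by
      rw [hL]; simp [Matrix.smul_apply]
    have h2 : (H * Matrix.diagonal Λ * Hᵀ) u u = ∑ k, Λ k := by
      rw [Matrix.mul_apply]
      refine Finset.sum_congr rfl fun k _ => ?_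
      rw [Matrix.mul_diagonal, Matrix.transpose_apply]
      rcases hpm u k with h | h <;> rw [h] <;> ring
    rw [← lap_diag G u, h1, h2]
  intro u v
  have : (G.degree u : ℝ) = (G.degree v : ℝ) := by rw [key u, key v]
  exact_mod_cast this
end

section
/- If a graph G is Hadamard diagonalizable, then every eigenvalue of its Laplacian matrix is an even integer. -/
open Matrix

open scoped Classical in
theorem lap_entry_cast {n : ℕ} (G : SimpleGraph (Fin n)) (a b : Fin n) :
    lap G a b = ((G.lapMatrix ℤ a b : ℤ) : ℝ) := by
  simp only [lap, SimpleGraph.lapMatrix, SimpleGraph.degMatrix, SimpleGraph.adjMatrix,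
    Matrix.sub_apply, Matrix.diagonal_apply, Matrix.of_apply]
  split_ifs <;> push_cast <;> ring

theorem hadamardDiagonalizable_even_eigenvalues {n : ℕ} (G : SimpleGraph (Fin n))
    (hG : HadamardDiagonalizable G) (μ : ℝ)
    (hμ : Module.End.HasEigenvalue (Matrix.toLin' (lap G)) μ) :
    ∃ k : ℤ, μ = 2 * k := by
  classical
  obtain ⟨H, Λ, ⟨hpm, hHH⟩, hL⟩ := hG
  rcases Nat.eq_zero_or_pos n with hn | hn
  · exfalso
    subst hn
    exact hμ (Subsingleton.elim _ _)
  have hn0 : (n : ℝ) ≠ 0 := Nat.cast_ne_zero.mpr hn.ne'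
  -- H is invertible, with inverse (n : ℝ)⁻¹ • Hᵀ
  have hinv : ((n : ℝ)⁻¹ • Hᵀ) * H = 1 := by
    rw [Matrix.smul_mul, hHH, smul_smul, inv_mul_cancel₀ hn0, one_smul]
  have hinv' : H * ((n : ℝ)⁻¹ • Hᵀ) = 1 := mul_eq_one_comm.mp hinv
  have hHHT : H * Hᵀ = (n : ℝ) • 1 := by
    have := congrArg (fun M => (n : ℝ) • M) hinv'
    simpa [Matrix.mul_smul, smul_smul, mul_inv_cancel₀ hn0] using this
  -- Hᵀ * lap G = diagonal Λ * Hᵀ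
  have key : Hᵀ * lap G = Matrix.diagonal Λ * Hᵀ := by
    rw [hL, Matrix.mul_smul]
    rw [show Hᵀ * (H * Matrix.diagonal Λ * Hᵀ) = (Hᵀ * H) * (Matrix.diagonal Λ * Hᵀ) by
      simp [Matrix.mul_assoc]]
    rw [hHH, Matrix.smul_mul, smul_smul, inv_mul_cancel₀ hn0, one_smul, Matrix.one_mul]
  -- lap G * H = H * diagonal Λ
  have key2 : lap G * H = H * Matrix.diagonal Λ := by
    rw [hL, Matrix.smul_mul, Matrix.mul_assoc (H * Matrix.diagonal Λ) Hᵀ H, hHH,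
      Matrix.mul_smul, Matrix.mul_one, smul_smul, inv_mul_cancel₀ hn0, one_smul]
  -- get an eigenvector
  obtain ⟨v, hv⟩ := hμ.exists_hasEigenvector
  have hvec : lap G *ᵥ v = μ • v := by
    have := hv.apply_eq_smul
    simpa [Matrix.toLin'_apply] using this
  set w := Hᵀ *ᵥ v with hw
  have hDw : Matrix.diagonal Λ *ᵥ w = μ • w := by
    have h1 : Hᵀ *ᵥ (lap G *ᵥ v) = Matrix.diagonal Λ *ᵥ w := by
      rw [hw, Matrix.mulVec_mulVec, Matrix.mulVec_mulVec, key]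
    rw [← h1, hvec, Matrix.mulVec_smul, hw]
  have hwne : w ≠ 0 := by
    intro h0
    apply hv.2
    have h2 : H *ᵥ w = 0 := by rw [h0, Matrix.mulVec_zero]
    rw [hw, Matrix.mulVec_mulVec, hHHT, Matrix.smul_mulVec, Matrix.one_mulVec] at h2
    rcases smul_eq_zero.mp h2 with h3 | h3
    · exact absurd h3 hn0
    · exact h3
  obtain ⟨i, hi⟩ : ∃ i, w i ≠ 0 := by
    by_contra h
    push_neg at h
    exact hwne (funext h)
  have hμΛ : μ = Λ i := by
    have := congrFun hDw i
    rw [Matrix.mulVec_diagonal] at this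
    have := mul_right_cancel₀ hi (by simpa [mul_comm] using this)
    exact this.symm
  -- column i of H is an eigenvector with eigenvalue Λ i
  set h : Fin n → ℝ := fun j => H j i with hh
  have hcol : lap G *ᵥ h = Λ i • h := by
    ext j
    have := congrFun (congrFun key2 j) i
    simp only [Matrix.mul_apply] at this
    have lhs : (lap G *ᵥ h) j = ∑ x, lap G j x * H x i := by
      simp [Matrix.mulVec, dotProduct, hh]
    rw [lhs, this]
    simp [Matrix.diagonal, Finset.mul_sum, hh, Matrix.mul_apply, mul_comm]
  -- signs as integers
  set ε : Fin n → ℤ := fun j => if H j i = 1 then 1 else -1 with hε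
  have hεcast : ∀ j, ((ε j : ℤ) : ℝ) = H j i := by
    intro j
    rcases hpm j i with hj | hj <;> norm_num [hε, hj]
  -- the integer row sum
  set m : ℤ := ∑ j, G.lapMatrix ℤ ⟨0, hn⟩ j * ε j with hm
  have hmcast : ((m : ℤ) : ℝ) = (lap G *ᵥ h) ⟨0, hn⟩ := by
    simp only [hm, Matrix.mulVec, dotProduct]
    push_cast
    refine Finset.sum_congr rfl fun j _ => ?_
    rw [hεcast j, lap_entry_cast]
  have hrowsum : ∑ j, G.lapMatrix ℤ ⟨0, hn⟩ j = 0 := by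
    have := congrFun (G.lapMatrix_mulVec_const_eq_zero (R := ℤ)) ⟨0, hn⟩
    simpa [Matrix.mulVec, dotProduct] using this
  have hmeven : Even m := by
    have h1 : Even (m - ∑ j, G.lapMatrix ℤ ⟨0, hn⟩ j) := by
      rw [hm, ← Finset.sum_sub_distrib]
      apply Finset.even_sum
      intro j _
      have : G.lapMatrix ℤ ⟨0, hn⟩ j * ε j - G.lapMatrix ℤ ⟨0, hn⟩ j
          = G.lapMatrix ℤ ⟨0, hn⟩ j * (ε j - 1) := by ring
      rw [this]
      rcases hpm j i with hj | hj
      · have he : ε j = 1 := by simp [hε, hj]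
        simp [he]
      · have he : ε j = -1 := by norm_num [hε, hj]
        rw [he]
        exact ⟨-(G.lapMatrix ℤ ⟨0, hn⟩ j), by ring⟩
    simpa [hrowsum] using h1
  obtain ⟨k, hk⟩ := hmeven
  -- conclude
  have hμh : μ * h ⟨0, hn⟩ = (m : ℝ) := by
    rw [hmcast, hcol]
    simp [mul_comm, hμΛ]
  have hsq : h ⟨0, hn⟩ * h ⟨0, hn⟩ = 1 := by
    rcases hpm ⟨0, hn⟩ i with hj | hj <;> simp [hh, hj]
  refine ⟨k * ε ⟨0, hn⟩, ?_⟩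
  have : μ = (m : ℝ) * h ⟨0, hn⟩ := by
    have := congrArg (· * h ⟨0, hn⟩) hμh
    simpa [mul_assoc, hsq] using this
  rw [this, hk]
  push_cast
  rw [hεcast]
  simp only [hh]
  ring
end

section
/- Let G be a Hadamard diagonalizable graph on n vertices where n ≡ 4 (mod 8). Then G is one of: the complete graph K_n, the complete bipartite graph K_{n/2,n/2}, the disjoint union of two copies of K_{n/2}, or the empty graph on n vertices. -/
open Matrix

open Finset
open scoped Classical

section Analytic

variable {n : ℕ} {G : SimpleGraph (Fin n)}

lemma lap_apply_eq (u : Fin n) : lap G u u = (G.degree u : ℝ) := by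
  simp [lap, SimpleGraph.lapMatrix, SimpleGraph.degMatrix, Matrix.sub_apply,
    Matrix.diagonal_apply_eq, SimpleGraph.adjMatrix_apply]

lemma lap_apply_ne {u v : Fin n} (h : u ≠ v) :
    lap G u v = if G.Adj u v then (-1 : ℝ) else 0 := by
  simp [lap, SimpleGraph.lapMatrix, SimpleGraph.degMatrix, Matrix.sub_apply,
    Matrix.diagonal_apply_ne _ h, SimpleGraph.adjMatrix_apply]
  by_cases hadj : G.Adj u v <;> simp [hadj]

lemma lap_row_sum (u : Fin n) : ∑ v, lap G u v = 0 := by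
  have := congrFun (G.lapMatrix_mulVec_const_eq_zero (R := ℝ)) u
  rw [Matrix.mulVec, dotProduct] at this
  simpa [lap] using this

end Analytic

lemma classify {n d : ℕ} (hn : n % 8 = 4) (G : SimpleGraph (Fin n))
    (hreg : ∀ u : Fin n, G.degree u = d)
    (hpar : ∀ u v w : Fin n, u ≠ v → u ≠ w → v ≠ w →
      ((if G.Adj u v then 1 else 0) + (if G.Adj u w then 1 else 0)
        + (if G.Adj v w then 1 else 0) : ZMod 2) = (d : ZMod 2)) :
    G = ⊤ ∨ G = ⊥ ∨
    (∃ A : Finset (Fin n), A.card = n / 2 ∧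
      ∀ u v : Fin n, G.Adj u v ↔ (u ≠ v ∧ (u ∈ A ↔ v ∈ A))) ∨
    (∃ A : Finset (Fin n), A.card = n / 2 ∧
      ∀ u v : Fin n, G.Adj u v ↔ ¬(u ∈ A ↔ v ∈ A)) := by
  have hn4 : 4 ≤ n := by omega
  set f : Fin n → Fin n → ZMod 2 := fun u v => if G.Adj u v then 1 else 0 with hf
  set δ : ZMod 2 := (d : ZMod 2) with hδ
  set u₀ : Fin n := ⟨0, by omega⟩ with hu₀
  set A : Finset (Fin n) := univ.filter (fun v => v = u₀ ∨ f u₀ v = δ) with hA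
  have memA : ∀ v, v ∈ A ↔ (v = u₀ ∨ f u₀ v = δ) := by
    intro v; simp [hA]
  have hu₀A : u₀ ∈ A := (memA u₀).mpr (Or.inl rfl)
  have fsymm : ∀ u v, f u v = f v u := by
    intro u v; simp [hf, G.adj_comm]
  have hz2 : ∀ a b c e : ZMod 2, a + b + c = e → (c = e ↔ (a = e ↔ b = e)) := by decide
  have key : ∀ u v : Fin n, u ≠ v → (f u v = δ ↔ (u ∈ A ↔ v ∈ A)) := by
    intro u v huv
    by_cases hu : u = u₀
    · subst hu
      have hv : ¬ v = u₀ := fun h => huv h.symm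
      simp [memA, hv, hu₀A]
    · by_cases hv : v = u₀
      · subst hv
        rw [fsymm]
        simp [memA, hu, hu₀A]
      · have h3 := hpar u₀ u v (fun h => hu h.symm) (fun h => hv h.symm) huv
        have := hz2 _ _ _ _ h3
        simp [memA, hu, hv]
        exact this
  have hAdjf : ∀ u v : Fin n, u ≠ v → (G.Adj u v ↔ f u v = 1) := by
    intro u v _
    by_cases h : G.Adj u v <;> simp [hf, h]
  have hδ01 : δ = 0 ∨ δ = 1 := by
    have : ∀ x : ZMod 2, x = 0 ∨ x = 1 := by decide
    exact this δ
  have hcardA_le : A.card ≤ n := by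
    simpa using Finset.card_le_card (Finset.subset_univ A)
  rcases hδ01 with h0 | h1
  · -- d even: G is empty or complete bipartite
    have charac : ∀ u v : Fin n, G.Adj u v ↔ ¬(u ∈ A ↔ v ∈ A) := by
      intro u v
      by_cases huv : u = v
      · subst huv; simp
      · rw [hAdjf u v huv]
        have hdich : f u v = 0 ∨ f u v = 1 := by
          by_cases h : G.Adj u v <;> simp [hf, h]
        rw [← key u v huv, h0]
        rcases hdich with h | h <;> simp [h]
    by_cases hAll : ∀ v, v ∈ A
    · right; left
      ext u v
      simp [charac, hAll u, hAll v]
    · push_neg at hAll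
      obtain ⟨w, hw⟩ := hAll
      -- degree of u₀ : neighbors = univ \ A
      have hnb0 : G.neighborFinset u₀ = univ \ A := by
        ext v
        simp only [SimpleGraph.mem_neighborFinset, charac, Finset.mem_sdiff, Finset.mem_univ,
          true_and]
        tauto
      have hnbw : G.neighborFinset w = A := by
        ext v
        simp only [SimpleGraph.mem_neighborFinset, charac]
        constructor
        · intro h; by_contra hv; exact h (iff_of_false hw hv)
        · intro h hiff; exact hw (hiff.mpr h)
      have hd0 : d = n - A.card := by
        rw [← hreg u₀, SimpleGraph.degree, hnb0, Finset.card_sdiff_of_subset (Finset.subset_univ A)]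
        simp
      have hdw : d = A.card := by
        rw [← hreg w, SimpleGraph.degree, hnbw]
      right; right; right
      exact ⟨A, by omega, charac⟩
  · -- d odd : G is complete or union of two cliques
    have charac : ∀ u v : Fin n, G.Adj u v ↔ (u ≠ v ∧ (u ∈ A ↔ v ∈ A)) := by
      intro u v
      by_cases huv : u = v
      · subst huv; simp
      · rw [hAdjf u v huv, ← h1, key u v huv]
        tauto
    by_cases hAll : ∀ v, v ∈ A
    · left
      ext u v
      simp [charac, hAll u, hAll v, ne_comm]
    · push_neg at hAll
      obtain ⟨w, hw⟩ := hAll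
      have hnb0 : G.neighborFinset u₀ = A.erase u₀ := by
        ext v
        simp only [SimpleGraph.mem_neighborFinset, charac, Finset.mem_erase]
        constructor
        · rintro ⟨h1, h2⟩; exact ⟨fun h => h1 h.symm, h2.mp hu₀A⟩
        · rintro ⟨h1, h2⟩; exact ⟨fun h => h1 h.symm, iff_of_true hu₀A h2⟩
      have hwA : w ∈ univ \ A := by simp [hw]
      have hnbw : G.neighborFinset w = (univ \ A).erase w := by
        ext v
        simp only [SimpleGraph.mem_neighborFinset, charac, Finset.mem_erase, Finset.mem_sdiff,
          Finset.mem_univ, true_and]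
        constructor
        · rintro ⟨h1, h2⟩; exact ⟨fun h => h1 h.symm, fun hv => hw (h2.mpr hv)⟩
        · rintro ⟨h1, h2⟩; exact ⟨fun h => h1 h.symm, iff_of_false hw h2⟩
      have hd0 : d = A.card - 1 := by
        rw [← hreg u₀, SimpleGraph.degree, hnb0, Finset.card_erase_of_mem hu₀A]
      have hA1 : 1 ≤ A.card := Finset.card_pos.mpr ⟨u₀, hu₀A⟩
      have hdw : d = (n - A.card) - 1 := by
        rw [← hreg w, SimpleGraph.degree, hnbw, Finset.card_erase_of_mem hwA,
          Finset.card_sdiff_of_subset (Finset.subset_univ A)]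
        simp
      have hAn : A.card < n := by
        by_contra h
        push_neg at h
        have : A = univ := by
          apply Finset.eq_univ_of_card
          simp only [Fintype.card_fin]
          omega
        rw [this] at hw; simp at hw
      right; right; left
      exact ⟨A, by omega, charac⟩

theorem hadamardDiagonalizable_of_mod_eight_eq_four {n : ℕ} (hn : n % 8 = 4)
    (G : SimpleGraph (Fin n)) (hG : HadamardDiagonalizable G) :
    G = ⊤ ∨ G = ⊥ ∨
    (∃ A : Finset (Fin n), A.card = n / 2 ∧
      ∀ u v : Fin n, G.Adj u v ↔ (u ≠ v ∧ (u ∈ A ↔ v ∈ A))) ∨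
    (∃ A : Finset (Fin n), A.card = n / 2 ∧
      ∀ u v : Fin n, G.Adj u v ↔ ¬(u ∈ A ↔ v ∈ A)) := by
  obtain ⟨H, Λ, ⟨hpm, horto⟩, hLeq⟩ := hG
  have hn0 : (n : ℝ) ≠ 0 := by
    have : 4 ≤ n := by omega
    positivity
  have hsq : ∀ u k, H u k * H u k = 1 := by
    intro u k; rcases hpm u k with h | h <;> rw [h] <;> norm_num
  -- entries of lap
  have hLentry : ∀ u v, (n : ℝ) * lap G u v = ∑ k, Λ k * (H u k * H v k) := by
    intro u v
    rw [hLeq]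
    simp only [Matrix.smul_apply, smul_eq_mul]
    rw [← mul_assoc, mul_inv_cancel₀ hn0, one_mul]
    rw [Matrix.mul_apply]
    congr 1; funext k
    rw [Matrix.mul_diagonal, Matrix.transpose_apply]
    ring
  -- eigen equation
  have hmat : lap G * H = H * Matrix.diagonal Λ := by
    rw [hLeq, Matrix.smul_mul, Matrix.mul_assoc (H * Matrix.diagonal Λ) Hᵀ H, horto]
    rw [Matrix.mul_smul, Matrix.mul_one, smul_smul, inv_mul_cancel₀ hn0, one_smul]
  have hEig : ∀ k u, ∑ v, lap G u v * H v k = H u k * Λ k := by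
    intro k u
    have := congrFun (congrFun hmat u) k
    rw [Matrix.mul_apply, Matrix.mul_diagonal] at this
    exact this
  set u₀ : Fin n := ⟨0, by omega⟩ with hu₀def
  -- each eigenvalue is twice a natural number
  have hval : ∀ k, ∃ s : ℕ, Λ k = 2 * s := by
    intro k
    have h1 := hEig k u₀
    have h2 : Λ k = ∑ v, lap G u₀ v * (H v k * H u₀ k) := by
      have h1' := congrArg (fun x => x * H u₀ k) h1
      simp only [Finset.sum_mul] at h1'
      calc Λ k = H u₀ k * Λ k * H u₀ k := by
                  rw [mul_comm (H u₀ k) (Λ k), mul_assoc, hsq, mul_one]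
        _ = ∑ v, lap G u₀ v * (H v k * H u₀ k) := by
              rw [← h1']
              exact Finset.sum_congr rfl fun v _ => by ring
    have h3 : Λ k = ∑ v, lap G u₀ v * (H v k * H u₀ k - 1) := by
      have := lap_row_sum (G := G) u₀
      calc Λ k = (∑ v, lap G u₀ v * (H v k * H u₀ k)) - (∑ v, lap G u₀ v) * 1 := by
                  rw [this]; rw [← h2]; ring
        _ = ∑ v, lap G u₀ v * (H v k * H u₀ k - 1) := by
              rw [Finset.sum_mul, ← Finset.sum_sub_distrib]
              exact Finset.sum_congr rfl fun v _ => by ring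
    have h4 : Λ k = ∑ v, (if G.Adj u₀ v ∧ H v k ≠ H u₀ k then (2:ℝ) else 0) := by
      rw [h3]
      refine Finset.sum_congr rfl fun v _ => ?_
      by_cases hv : v = u₀
      · subst hv
        simp [hsq, G.loopless]
      · rcases hpm v k with ha | ha <;> rcases hpm u₀ k with hb | hb <;>
          by_cases hadj : G.Adj u₀ v <;>
          simp [lap_apply_ne (fun h : u₀ = v => hv h.symm), ha, hb, hadj] <;> norm_num
    refine ⟨(Finset.univ.filter (fun v => G.Adj u₀ v ∧ H v k ≠ H u₀ k)).card, ?_⟩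
    rw [h4, Finset.sum_ite, Finset.sum_const_zero, add_zero, Finset.sum_const,
      nsmul_eq_mul]
    ring
  choose s hs using hval
  -- regularity
  have hdeg : ∀ u : Fin n, (G.degree u : ℝ) * n = ∑ k, Λ k := by
    intro u
    have h := hLentry u u
    rw [lap_apply_eq] at h
    calc (G.degree u : ℝ) * n = (n : ℝ) * (G.degree u) := by ring
      _ = ∑ k, Λ k := by
          rw [h]; exact Finset.sum_congr rfl fun k _ => by rw [hsq, mul_one]
  have hreg : ∀ u : Fin n, G.degree u = G.degree u₀ := by
    intro u
    have : (G.degree u : ℝ) = (G.degree u₀ : ℝ) :=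
      mul_right_cancel₀ hn0 ((hdeg u).trans (hdeg u₀).symm)
    exact_mod_cast this
  set d : ℕ := G.degree u₀ with hd
  have hsum : ∑ k, Λ k = (n : ℝ) * d := by
    rw [← hdeg u₀]; ring
  -- triple identity
  have hpar : ∀ u v w : Fin n, u ≠ v → u ≠ w → v ≠ w →
      ((if G.Adj u v then 1 else 0) + (if G.Adj u w then 1 else 0)
        + (if G.Adj v w then 1 else 0) : ZMod 2) = (d : ZMod 2) := by
    intro u v w huv huw hvw
    have htrip : ∑ k, Λ k * (H u k * H v k + H u k * H w k + H v k * H w k + 1)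
        = (n:ℝ) * lap G u v + n * lap G u w + n * lap G v w + n * d := by
      rw [hLentry, hLentry, hLentry, ← hsum,
        ← Finset.sum_add_distrib, ← Finset.sum_add_distrib, ← Finset.sum_add_distrib]
      exact Finset.sum_congr rfl fun k _ => by ring
    have hpt : ∀ k, Λ k * (H u k * H v k + H u k * H w k + H v k * H w k + 1)
        = (if H u k = H v k ∧ H u k = H w k then 4 * Λ k else 0) := by
      intro k
      rcases hpm u k with ha | ha <;> rcases hpm v k with hb | hb <;>
        rcases hpm w k with hc | hc <;> rw [ha, hb, hc] <;> norm_num <;> ring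
    set T : Finset (Fin n) := Finset.univ.filter (fun k => H u k = H v k ∧ H u k = H w k)
      with hT
    set N : ℕ := ∑ k ∈ T, s k with hN
    have hlhs : ∑ k, Λ k * (H u k * H v k + H u k * H w k + H v k * H w k + 1)
        = 8 * (N : ℝ) := by
      rw [Finset.sum_congr rfl fun k _ => hpt k, Finset.sum_ite, Finset.sum_const_zero,
        add_zero, ← Finset.mul_sum]
      have : ∑ k ∈ T, Λ k = 2 * (N : ℝ) := by
        rw [hN, Nat.cast_sum, Finset.mul_sum]
        exact Finset.sum_congr rfl fun k _ => hs k
      rw [this]; ring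
    -- indicators
    set e1 : ℕ := if G.Adj u v then 1 else 0 with he1
    set e2 : ℕ := if G.Adj u w then 1 else 0 with he2
    set e3 : ℕ := if G.Adj v w then 1 else 0 with he3
    have hlap1 : lap G u v = -(e1 : ℝ) := by
      rw [lap_apply_ne huv, he1]; by_cases h : G.Adj u v <;> simp [h]
    have hlap2 : lap G u w = -(e2 : ℝ) := by
      rw [lap_apply_ne huw, he2]; by_cases h : G.Adj u w <;> simp [h]
    have hlap3 : lap G v w = -(e3 : ℝ) := by
      rw [lap_apply_ne hvw, he3]; by_cases h : G.Adj v w <;> simp [h]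
    have hreal : 8 * (N : ℝ) + (n : ℝ) * (e1 + e2 + e3) = (n : ℝ) * d := by
      rw [← hlhs, htrip, hlap1, hlap2, hlap3]; ring
    have hnat : 8 * N + n * (e1 + e2 + e3) = n * d := by exact_mod_cast hreal
    -- parity extraction
    have hpar2 : (e1 + e2 + e3) % 2 = d % 2 := by
      set t : ℕ := n / 8 with ht
      have hn8 : n = 8 * t + 4 := by omega
      rw [hn8] at hnat
      have ha : (8 * t + 4) * (e1 + e2 + e3) = 8 * (t * (e1 + e2 + e3)) + 4 * (e1+e2+e3) := by
        ring
      have hb : (8 * t + 4) * d = 8 * (t * d) + 4 * d := by ring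
      rw [ha, hb] at hnat
      omega
    have hcast : ((e1 + e2 + e3 : ℕ) : ZMod 2) = ((d : ℕ) : ZMod 2) :=
      (ZMod.natCast_eq_natCast_iff _ _ _).mpr hpar2
    rw [he1, he2, he3] at hcast
    push_cast at hcast
    convert hcast using 2
  exact classify hn G hreg hpar
end

section
/- Let G be a Hadamard diagonalizable graph on n vertices containing four distinct vertices u, v, w, x with uv, vw, wx edges and ux a non-edge. Then n is divisible by 8. -/
open Matrix

open scoped Classical in
lemma lap_offdiag {n : ℕ} (G : SimpleGraph (Fin n)) {a b : Fin n} (hab : a ≠ b) :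
    lap G a b = if G.Adj a b then -1 else 0 := by
  simp [lap, SimpleGraph.lapMatrix, SimpleGraph.degMatrix, Matrix.sub_apply,
    Matrix.diagonal_apply_ne _ hab, SimpleGraph.adjMatrix_apply]
  split <;> simp

open scoped Classical in
lemma lap_rowsum {n : ℕ} (G : SimpleGraph (Fin n)) (a : Fin n) :
    ∑ j, lap G a j = 0 := by
  have h := congrFun (G.lapMatrix_mulVec_const_eq_zero (R := ℝ)) a
  simpa [Matrix.mulVec, dotProduct, lap] using h

theorem eight_dvd_of_path {n : ℕ} (G : SimpleGraph (Fin n))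
    (hG : HadamardDiagonalizable G) (u v w x : Fin n)
    (huv : u ≠ v) (huw : u ≠ w) (hux : u ≠ x) (hvw : v ≠ w) (hvx : v ≠ x) (hwx : w ≠ x)
    (h1 : G.Adj u v) (h2 : G.Adj v w) (h3 : G.Adj w x) (h4 : ¬ G.Adj u x) :
    8 ∣ n := by
  classical
  obtain ⟨H, Λ, ⟨hsign, horth⟩, hL⟩ := hG
  have hn0 : 0 < n := Fin.pos u
  have hnR : (n : ℝ) ≠ 0 := Nat.cast_ne_zero.mpr hn0.ne'
  -- square of entries is 1
  have hsq : ∀ i j, H i j * H i j = 1 := by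
    intro i j; rcases hsign i j with h | h <;> rw [h] <;> ring
  -- L * H = H * diagonal Λ
  have hLH : lap G * H = H * Matrix.diagonal Λ := by
    rw [hL, Matrix.smul_mul, Matrix.mul_assoc, Matrix.mul_assoc, horth, Matrix.mul_smul,
      Matrix.mul_one, Matrix.mul_smul, smul_smul, inv_mul_cancel₀ hnR, one_smul]
  -- each Λ k is twice an integer
  have heven : ∀ k, ∃ c : ℤ, Λ k = 2 * c := by
    intro k
    have h1' : ∑ j, lap G u j * H j k = H u k * Λ k := by
      have h := congrFun (congrFun hLH u) k
      rw [Matrix.mul_diagonal, Matrix.mul_apply] at h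
      exact h
    have hΛ : Λ k = ∑ j, lap G u j * (H u k * H j k - 1) := by
      have : ∑ j, lap G u j * (H u k * H j k - 1)
          = H u k * ∑ j, lap G u j * H j k - ∑ j, lap G u j := by
        rw [Finset.mul_sum, ← Finset.sum_sub_distrib]
        congr 1; ext j; ring
      rw [this, h1', lap_rowsum]
      rcases hsign u k with h | h <;> rw [h] <;> ring
    have hterm : ∀ j, ∃ c : ℤ, lap G u j * (H u k * H j k - 1) = 2 * c := by
      intro j
      by_cases hj : j = u
      · subst hj; exact ⟨0, by rw [hsq]; ring⟩
      · rw [lap_offdiag G (Ne.symm hj)]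
        by_cases ha : G.Adj u j
        · rcases hsign u k with h | h <;> rcases hsign j k with h' | h' <;>
            simp [ha, h, h'] <;> exact ⟨1, by ring⟩
        · exact ⟨0, by simp [ha]⟩
    choose c hc using hterm
    exact ⟨∑ j, c j, by rw [hΛ]; push_cast [Finset.mul_sum]; exact Finset.sum_congr rfl fun j _ => hc j⟩
  -- product factor divisible by 4
  have hprod : ∀ k, ∃ d : ℤ, (H u k + H w k) * (H v k + H x k) = 4 * d := by
    intro k
    rcases hsign u k with h | h <;> rcases hsign w k with h' | h' <;>
      rcases hsign v k with h'' | h'' <;> rcases hsign x k with h''' | h''' <;>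
      rw [h, h', h'', h'''] <;>
      first
        | (refine ⟨0, ?_⟩; push_cast; ring1)
        | (refine ⟨1, ?_⟩; push_cast; ring1)
        | (refine ⟨-1, ?_⟩; push_cast; ring1)
  -- entries of L in terms of H, Λ
  have hent : ∀ a b, (n : ℝ) * lap G a b = ∑ k, Λ k * H a k * H b k := by
    intro a b
    have h := congrFun (congrFun hL a) b
    rw [h, Matrix.smul_apply, Matrix.mul_apply]
    simp only [Matrix.mul_diagonal, Matrix.transpose_apply, smul_eq_mul]
    rw [← mul_assoc, mul_inv_cancel₀ hnR, one_mul]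
    congr 1; ext k; ring
  -- the key sum
  have hkey : ∑ k, Λ k * ((H u k + H w k) * (H v k + H x k)) = -3 * n := by
    have expand : ∀ k, Λ k * ((H u k + H w k) * (H v k + H x k))
        = Λ k * H u k * H v k + Λ k * H u k * H x k
          + Λ k * H w k * H v k + Λ k * H w k * H x k := by intro k; ring
    simp_rw [expand]
    rw [Finset.sum_add_distrib, Finset.sum_add_distrib, Finset.sum_add_distrib,
      ← hent u v, ← hent u x, ← hent w v, ← hent w x]
    rw [lap_offdiag G huv, lap_offdiag G hux, lap_offdiag G (Ne.symm hvw), lap_offdiag G hwx]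
    simp [h1, h2.symm, h3, h4]
    ring
  -- combine: each term divisible by 8
  have hterm8 : ∀ k, ∃ e : ℤ, Λ k * ((H u k + H w k) * (H v k + H x k)) = 8 * e := by
    intro k
    obtain ⟨c, hc⟩ := heven k
    obtain ⟨d, hd⟩ := hprod k
    exact ⟨c * d, by rw [hc, hd]; push_cast; ring⟩
  choose e he using hterm8
  have hsum : (8 : ℝ) * (∑ k, e k : ℤ) = -3 * n := by
    rw [← hkey]; push_cast [Finset.mul_sum]
    exact (Finset.sum_congr rfl fun k _ => (he k).symm)
  have hint : (8 : ℤ) * (∑ k, e k) = -3 * n := by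
    exact_mod_cast hsum
  have h8 : (3 : ℤ) * n = 8 * (-(∑ k, e k)) := by linarith [hint]
  have h8n : (8 : ℤ) ∣ (n : ℤ) := by omega
  exact_mod_cast h8n
end

section
/- If n is even and there exists a Hadamard matrix of order n, then the disjoint union of two complete graphs on n/2 vertices, 2K_{n/2}, is Hadamard diagonalizable. -/
open Matrix

/-- The disjoint union of two complete graphs on `n/2` vertices each,
realized on `Fin n` with parts `{0,…,n/2-1}` and `{n/2,…,n-1}`. -/
def twoCliques (n : ℕ) : SimpleGraph (Fin n) where
  Adj u v := u ≠ v ∧ ((u : ℕ) < n / 2 ↔ (v : ℕ) < n / 2)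
  symm := by refine ⟨?_⟩; intro u v h; exact ⟨h.1.symm, h.2.symm⟩
  loopless := by refine ⟨?_⟩; intro u h; exact h.1 rfl

private lemma subtypeCongr_prop {α : Type*} {p q : α → Prop} [DecidablePred p] [DecidablePred q]
    (e : { x // p x } ≃ { x // q x }) (f : { x // ¬p x } ≃ { x // ¬q x }) (x : α) :
    q (Equiv.subtypeCongr e f x) ↔ p x := by
  by_cases h : p x
  · simp only [Equiv.subtypeCongr, Equiv.trans_apply, Equiv.sumCongr_apply,
      Equiv.sumCompl_symm_apply_of_pos h, Sum.map_inl, Equiv.sumCompl_apply_inl]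
    exact iff_of_true (e ⟨x, h⟩).2 h
  · simp only [Equiv.subtypeCongr, Equiv.trans_apply, Equiv.sumCongr_apply,
      Equiv.sumCompl_symm_apply_of_neg h, Sum.map_inr, Equiv.sumCompl_apply_inr]
    exact iff_of_false (f ⟨x, h⟩).2 h

private lemma card_filter_lt (n h : ℕ) (hh : h ≤ n) :
    (Finset.univ.filter fun v : Fin n => (v : ℕ) < h).card = h := by
  rw [show (Finset.univ.filter fun v : Fin n => (v : ℕ) < h)
      = Finset.map (Fin.castLEEmb hh) Finset.univ by
    ext v; simp [Fin.ext_iff]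
    constructor
    · intro hv; exact ⟨⟨v, hv⟩, rfl⟩
    · rintro ⟨a, ha⟩; omega]
  simp

open scoped Classical in
private lemma twoCliques_degree {n h : ℕ} (hnh : n = 2 * h) (hpos : 0 < h) (u : Fin n) :
    (twoCliques n).degree u = h - 1 := by
  classical
  have hdiv : n / 2 = h := by omega
  have hadj : ∀ v, (twoCliques n).Adj u v ↔ (u ≠ v ∧ ((u : ℕ) < h ↔ (v : ℕ) < h)) := by
    intro v
    change (u ≠ v ∧ ((u : ℕ) < n / 2 ↔ (v : ℕ) < n / 2)) ↔ _
    rw [hdiv]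
  rw [← SimpleGraph.card_neighborFinset_eq_degree]
  have h1 : (twoCliques n).neighborFinset u
      = (Finset.univ.filter fun v : Fin n => ((u : ℕ) < h ↔ (v : ℕ) < h)).erase u := by
    ext v
    simp only [SimpleGraph.mem_neighborFinset, hadj, Finset.mem_erase, Finset.mem_filter,
      Finset.mem_univ, true_and]
    constructor
    · rintro ⟨h1, h2⟩; exact ⟨Ne.symm h1, h2⟩
    · rintro ⟨h1, h2⟩; exact ⟨Ne.symm h1, h2⟩
  rw [h1, Finset.card_erase_of_mem (by simp)]
  congr 1
  by_cases hu : (u : ℕ) < h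
  · have : (Finset.univ.filter fun v : Fin n => ((u : ℕ) < h ↔ (v : ℕ) < h))
        = Finset.univ.filter fun v : Fin n => (v : ℕ) < h := by
      ext v; simp [hu]
    rw [this, card_filter_lt n h (by omega)]
  · have : (Finset.univ.filter fun v : Fin n => ((u : ℕ) < h ↔ (v : ℕ) < h))
        = Finset.univ.filter fun v : Fin n => ¬ ((v : ℕ) < h) := by
      ext v; simp [hu]
    rw [this, Finset.filter_not, Finset.card_sdiff_of_subset (Finset.filter_subset _ _),
      card_filter_lt n h (by omega)]
    simp [hnh]; omega

theorem twoCliques_hadamardDiagonalizable {n : ℕ} (hn : Even n)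
    (hH : ∃ H : Matrix (Fin n) (Fin n) ℝ, IsHadamardMatrix H) :
    HadamardDiagonalizable (twoCliques n) := by
  classical
  obtain ⟨H0, hE0, hO0⟩ := hH
  rcases Nat.eq_zero_or_pos n with rfl | hpos
  · exact ⟨H0, fun _ => 0, ⟨hE0, hO0⟩, by ext i j; exact i.elim0⟩
  obtain ⟨h, hnh⟩ : ∃ h, n = 2 * h := by obtain ⟨k, hk⟩ := hn; exact ⟨k, by omega⟩
  have hh1 : 1 ≤ h := by omega
  set z : Fin n := ⟨0, by omega⟩ with hz
  set o : Fin n := ⟨1, by omega⟩ with ho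
  have hzo : z ≠ o := by simp [hz, ho, Fin.ext_iff]
  -- Step 1: row-normalize so that column z is all ones
  set H1 : Matrix (Fin n) (Fin n) ℝ := Matrix.of fun i j => H0 i z * H0 i j with hH1
  have hE1 : ∀ i j, H1 i j = 1 ∨ H1 i j = -1 := by
    intro i j
    rcases hE0 i z with h1 | h1 <;> rcases hE0 i j with h2 | h2 <;>
      simp [hH1, h1, h2]
  have hsq : ∀ i, H0 i z * H0 i z = 1 := by
    intro i; rcases hE0 i z with h1 | h1 <;> simp [h1]
  have hO1 : H1ᵀ * H1 = (n : ℝ) • 1 := by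
    rw [← hO0]
    ext j k
    simp only [Matrix.mul_apply, Matrix.transpose_apply, hH1, Matrix.of_apply]
    apply Finset.sum_congr rfl
    intro i _
    linear_combination (H0 i j * H0 i k) * hsq i
  have hcol0 : ∀ i, H1 i z = 1 := fun i => hsq i
  -- Step 2: column o sums to zero
  have hsum : ∑ i, H1 i o = 0 := by
    have := congrFun (congrFun hO1 z) o
    simp only [Matrix.mul_apply, Matrix.transpose_apply, Matrix.smul_apply, Matrix.one_apply,
      if_neg hzo, smul_zero] at this
    rw [← this]
    apply Finset.sum_congr rfl
    intro i _; rw [hcol0 i, one_mul]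
  -- Step 3: exactly h entries of column o are 1
  set s : Finset (Fin n) := Finset.univ.filter fun i => H1 i o = 1 with hs
  have hscard : s.card = h := by
    have hsplit : ∑ i, H1 i o
        = ∑ i ∈ s, H1 i o + ∑ i ∈ Finset.univ.filter (fun i => ¬ (H1 i o = 1)), H1 i o :=
      (Finset.sum_filter_add_sum_filter_not _ _ _).symm
    have hs1 : ∑ i ∈ s, H1 i o = (s.card : ℝ) := by
      have hv : ∀ i ∈ s, H1 i o = 1 := fun i hi => (Finset.mem_filter.mp hi).2
      rw [Finset.sum_congr rfl hv, Finset.sum_const, nsmul_eq_mul, mul_one]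
    have hs2 : ∑ i ∈ Finset.univ.filter (fun i => ¬ (H1 i o = 1)), H1 i o
        = -((Finset.univ.filter (fun i => ¬ (H1 i o = 1))).card : ℝ) := by
      have hv : ∀ i ∈ Finset.univ.filter (fun i => ¬ (H1 i o = 1)), H1 i o = -1 := by
        intro i hi
        rcases hE1 i o with h1 | h1
        · exact absurd h1 (Finset.mem_filter.mp hi).2
        · exact h1
      rw [Finset.sum_congr rfl hv, Finset.sum_const, nsmul_eq_mul, mul_neg_one]
    have hcards : s.card + (Finset.univ.filter (fun i => ¬ (H1 i o = 1))).card = n := by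
      rw [hs, Finset.card_filter_add_card_filter_not]; simp
    rw [hsplit, hs1, hs2] at hsum
    have : (s.card : ℝ) = ((Finset.univ.filter (fun i => ¬ (H1 i o = 1))).card : ℝ) := by
      linarith
    have hcc : s.card = (Finset.univ.filter (fun i => ¬ (H1 i o = 1))).card := by
      exact_mod_cast this
    omega
  -- Step 4: permutation matching column-o positives with {i : i < h}
  have hcard1 : Fintype.card {i : Fin n // H1 i o = 1} = h := by
    rw [Fintype.card_subtype]; exact hscard
  have hcard2 : Fintype.card {i : Fin n // (i : ℕ) < h} = h := by
    rw [Fintype.card_subtype]; exact card_filter_lt n h (by omega)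
  have hcard1' : Fintype.card {i : Fin n // ¬ (H1 i o = 1)}
      = Fintype.card {i : Fin n // ¬ ((i : ℕ) < h)} := by
    rw [Fintype.card_subtype_compl, Fintype.card_subtype_compl, hcard1, hcard2]
  set σ : Equiv.Perm (Fin n) :=
    Equiv.subtypeCongr (Fintype.equivOfCardEq (hcard1.trans hcard2.symm))
      (Fintype.equivOfCardEq hcard1') with hσ
  set H2 : Matrix (Fin n) (Fin n) ℝ := H1.submatrix σ.symm id with hH2
  have hE2 : ∀ i j, H2 i j = 1 ∨ H2 i j = -1 := fun i j => hE1 _ _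
  have hO2 : H2ᵀ * H2 = (n : ℝ) • 1 := by
    rw [hH2, Matrix.transpose_submatrix, Matrix.submatrix_mul_equiv, ← hO1]
    rfl
  have hcol0' : ∀ i, H2 i z = 1 := fun i => hcol0 _
  have hq : ∀ i : Fin n, H2 i o = 1 ↔ (i : ℕ) < h := by
    intro i
    have := subtypeCongr_prop (Fintype.equivOfCardEq (hcard1.trans hcard2.symm))
      (Fintype.equivOfCardEq hcard1') (σ.symm i)
    rw [show Equiv.subtypeCongr _ _ (σ.symm i) = σ (σ.symm i) from rfl,
      Equiv.apply_symm_apply] at this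
    exact (this.symm)
  have hsgn : ∀ i : Fin n, H2 i o = if (i : ℕ) < h then (1 : ℝ) else -1 := by
    intro i
    by_cases hi : (i : ℕ) < h
    · rw [if_pos hi]; exact (hq i).mpr hi
    · rw [if_neg hi]
      rcases hE2 i o with h1 | h1
      · exact absurd ((hq i).mp h1) hi
      · exact h1
  -- Step 5: H2 * H2ᵀ = n • 1
  have hn0 : (n : ℝ) ≠ 0 := by positivity
  have hHHT : H2 * H2ᵀ = (n : ℝ) • 1 := by
    have e1 : ((n : ℝ)⁻¹ • H2ᵀ) * H2 = 1 := by
      rw [Matrix.smul_mul, hO2, smul_smul, inv_mul_cancel₀ hn0, one_smul]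
    have e2 : H2 * ((n : ℝ)⁻¹ • H2ᵀ) = 1 := mul_eq_one_comm.mp e1
    rw [Matrix.mul_smul] at e2
    calc H2 * H2ᵀ = (n : ℝ) • ((n : ℝ)⁻¹ • (H2 * H2ᵀ)) := by
          rw [smul_smul, mul_inv_cancel₀ hn0, one_smul]
      _ = (n : ℝ) • 1 := by rw [e2]
  -- The spectrum
  set Λ : Fin n → ℝ := fun k => if k = z ∨ k = o then 0 else (h : ℝ) with hΛ
  refine ⟨H2, Λ, ⟨hE2, hO2⟩, ?_⟩
  ext i j
  -- compute RHS
  have key : ∑ k, H2 i k * Λ k * H2 j k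
      = (h : ℝ) * ((H2 * H2ᵀ) i j) - (h : ℝ) * (H2 i z * H2 j z)
        - (h : ℝ) * (H2 i o * H2 j o) := by
    have expand : ∑ k, ((h : ℝ) * (H2 i k * H2 j k))
        = ∑ k, (H2 i k * Λ k * H2 j k
            + (if k = z then (h : ℝ) * (H2 i z * H2 j z) else 0)
            + (if k = o then (h : ℝ) * (H2 i o * H2 j o) else 0)) := by
      apply Finset.sum_congr rfl
      intro k _
      by_cases hk1 : k = z
      · subst hk1
        rw [if_pos rfl, if_neg hzo, hΛ]
        simp
      · by_cases hk2 : k = o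
        · subst hk2
          rw [if_neg hk1, if_pos rfl, hΛ]
          simp
        · rw [if_neg hk1, if_neg hk2, hΛ]
          simp only [hk1, hk2, or_self, if_false]
          ring
    rw [Finset.sum_add_distrib, Finset.sum_add_distrib, Finset.sum_ite_eq' Finset.univ z,
      Finset.sum_ite_eq' Finset.univ o, if_pos (Finset.mem_univ z),
      if_pos (Finset.mem_univ o)] at expand
    have hmul : (H2 * H2ᵀ) i j = ∑ k, H2 i k * H2 j k := by
      simp [Matrix.mul_apply, Matrix.transpose_apply]
    rw [hmul, Finset.mul_sum]
    linarith [expand]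
  have rhs : ((n : ℝ)⁻¹ • (H2 * Matrix.diagonal Λ * H2ᵀ)) i j
      = (n : ℝ)⁻¹ * ((h : ℝ) * (if i = j then (n : ℝ) else 0) - (h : ℝ)
          - (h : ℝ) * (H2 i o * H2 j o)) := by
    have : (H2 * Matrix.diagonal Λ * H2ᵀ) i j = ∑ k, H2 i k * Λ k * H2 j k := by
      rw [Matrix.mul_apply]
      apply Finset.sum_congr rfl
      intro k _
      rw [Matrix.mul_diagonal, Matrix.transpose_apply]
    rw [Matrix.smul_apply, this, key, hHHT, hcol0' i, hcol0' j]
    simp [Matrix.one_apply, smul_eq_mul]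
  rw [rhs]
  -- compute LHS
  have hdeg : (twoCliques n).degree i = h - 1 := twoCliques_degree hnh (by omega) i
  have lhs : lap (twoCliques n) i j
      = (if i = j then ((h : ℝ) - 1) else 0)
        - (if (i : ℕ) < h ↔ (j : ℕ) < h then (if i = j then 0 else 1) else 0) := by
    rw [lap, SimpleGraph.lapMatrix, Matrix.sub_apply, SimpleGraph.degMatrix,
      Matrix.diagonal_apply, SimpleGraph.adjMatrix_apply]
    have hdiv : n / 2 = h := by omega
    have hadjiff : (twoCliques n).Adj i j ↔ (i ≠ j ∧ ((i : ℕ) < h ↔ (j : ℕ) < h)) := by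
      change (i ≠ j ∧ ((i : ℕ) < n / 2 ↔ (j : ℕ) < n / 2)) ↔ _
      rw [hdiv]
    by_cases hij : i = j
    · subst hij
      rw [if_pos rfl, if_neg ((twoCliques n).loopless.irrefl i), hdeg]
      rw [Nat.cast_sub hh1]
      simp
    · rw [if_neg hij]
      by_cases hblk : (i : ℕ) < h ↔ (j : ℕ) < h
      · rw [if_pos ((hadjiff).mpr ⟨hij, hblk⟩), if_pos hblk, if_neg hij, if_neg hij]
      · rw [if_neg (fun hadj => hblk ((hadjiff).mp hadj).2), if_neg hblk,
          if_neg (fun e : i = j => hblk (by rw [e]))]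
  rw [lhs, hsgn i, hsgn j]
  have hnr : (n : ℝ) = 2 * h := by rw [hnh]; push_cast; ring
  have hhr : (1 : ℝ) ≤ (h : ℝ) := by exact_mod_cast hh1
  have hh0 : (h : ℝ) ≠ 0 := Nat.cast_ne_zero.mpr (by omega)
  by_cases hij : i = j
  · subst hij
    rw [if_pos rfl, if_pos Iff.rfl, if_pos rfl]
    by_cases hi : (i : ℕ) < h <;>
      simp only [hi, if_true, if_false] <;> rw [hnr] <;> field_simp <;> ring
  · rw [if_neg hij]
    by_cases hi : (i : ℕ) < h <;> by_cases hj : (j : ℕ) < h <;>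
      simp only [hi, hj, iff_true, iff_false, not_true, not_false_iff, if_true, if_false,
        if_neg hij] <;> rw [hnr] <;> field_simp <;> ring
end

section
/- If n is even and there exists a Hadamard matrix of order n, then the complete bipartite graph K_{n/2,n/2} is Hadamard diagonalizable. -/
open Matrix

/-- The complete bipartite graph `K_{n/2,n/2}` realized on `Fin n` with parts
`{0,…,n/2-1}` and `{n/2,…,n-1}`. -/
def completeBipartiteHalf (n : ℕ) : SimpleGraph (Fin n) where
  Adj u v := ¬ ((u : ℕ) < n / 2 ↔ (v : ℕ) < n / 2)
  symm := by constructor; intro u v h h'; exact h h'.symm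
  loopless := by constructor; intro u h; exact h Iff.rfl

lemma card_filter_lt_fin {n m : ℕ} (hm : m < n) :
    (Finset.univ.filter (fun v : Fin n => (v : ℕ) < m)).card = m := by
  have h : Finset.univ.filter (fun v : Fin n => (v : ℕ) < m)
      = Finset.Iio (⟨m, hm⟩ : Fin n) := by
    ext v
    simp [Fin.lt_def]
  rw [h, Fin.card_Iio]

theorem completeBipartiteHalf_hadamardDiagonalizable {n : ℕ} (hn : Even n)
    (hH : ∃ H : Matrix (Fin n) (Fin n) ℝ, IsHadamardMatrix H) :
    HadamardDiagonalizable (completeBipartiteHalf n) := by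
  classical
  rcases Nat.eq_zero_or_pos n with h0 | hn0
  · subst h0
    refine ⟨1, 0, ⟨fun i _ => i.elim0, ?_⟩, ?_⟩
    · ext i j; exact i.elim0
    · ext i j; exact i.elim0
  -- now n ≥ 2 since n is even and positive
  obtain ⟨m, hm2⟩ : ∃ m, n = 2 * m := by
    obtain ⟨r, hr⟩ := hn; exact ⟨r, by omega⟩
  have hm1 : 1 ≤ m := by omega
  have h1n : 1 < n := by omega
  have hmn : m < n := by omega
  have hn2 : n / 2 = m := by omega
  set z : Fin n := ⟨0, by omega⟩ with hz
  set o : Fin n := ⟨1, h1n⟩ with ho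
  have hzo : z ≠ o := by simp [hz, ho, Fin.ext_iff]
  obtain ⟨H, hHpm, hHorth⟩ := hH
  have hsq : ∀ (A : Matrix (Fin n) (Fin n) ℝ), (∀ i j, A i j = 1 ∨ A i j = -1) →
      ∀ i j, A i j * A i j = 1 := by
    intro A hA i j; rcases hA i j with h | h <;> rw [h] <;> norm_num
  -- normalize rows so that column z is all ones
  set H1 : Matrix (Fin n) (Fin n) ℝ := Matrix.of (fun i j => H i z * H i j) with hH1def
  have hH1pm : ∀ i j, H1 i j = 1 ∨ H1 i j = -1 := by
    intro i j
    rcases hHpm i z with h | h <;> rcases hHpm i j with h' | h' <;>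
      simp [hH1def, h, h']
  have hH1orth : H1ᵀ * H1 = (n : ℝ) • 1 := by
    rw [← hHorth]
    ext j k
    simp only [Matrix.mul_apply, Matrix.transpose_apply, hH1def, Matrix.of_apply]
    refine Finset.sum_congr rfl fun i _ => ?_
    calc H i z * H i j * (H i z * H i k) = (H i z * H i z) * (H i j * H i k) := by ring
      _ = H i j * H i k := by rw [hsq H hHpm i z, one_mul]
  have hcol0 : ∀ i, H1 i z = 1 := fun i => hsq H hHpm i z
  -- column o has sum zero
  have hsum0 : ∑ i, H1 i o = 0 := by
    have h := congrFun (congrFun hH1orth z) o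
    simp only [Matrix.mul_apply, Matrix.transpose_apply, Matrix.smul_apply,
      Matrix.one_apply_ne hzo, smul_zero] at h
    rw [← h]
    refine Finset.sum_congr rfl fun i _ => ?_
    rw [hcol0 i, one_mul]
  -- the set of +1 entries in column o has cardinality m
  set P : Finset (Fin n) := Finset.univ.filter (fun i => H1 i o = 1) with hP
  have hcardP : P.card = m := by
    have hsplit : ∑ i, H1 i o
        = ∑ i ∈ P, H1 i o + ∑ i ∈ Finset.univ.filter (fun i => ¬ (H1 i o = 1)), H1 i o :=
      (Finset.sum_filter_add_sum_filter_not _ _ _).symm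
    have h1 : ∑ i ∈ P, H1 i o = (P.card : ℝ) := by
      rw [Finset.sum_congr rfl (fun i hi => (Finset.mem_filter.mp hi).2)]
      simp [hP]
    have h2 : ∑ i ∈ Finset.univ.filter (fun i => ¬ (H1 i o = 1)), H1 i o
        = -((Finset.univ.filter (fun i => ¬ (H1 i o = 1))).card : ℝ) := by
      have hall : ∀ i ∈ Finset.univ.filter (fun i => ¬ (H1 i o = 1)), H1 i o = -1 := by
        intro i hi
        rcases hH1pm i o with h | h
        · exact absurd h (Finset.mem_filter.mp hi).2
        · exact h
      rw [Finset.sum_congr rfl hall]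
      simp
    have hcards : P.card + (Finset.univ.filter (fun i => ¬ (H1 i o = 1))).card = n := by
      have := Finset.card_filter_add_card_filter_not
        (s := (Finset.univ : Finset (Fin n))) (p := fun i => H1 i o = 1)
      simpa using this
    rw [hsum0, h1, h2] at hsplit
    have hcast : (P.card : ℝ) = ((Finset.univ.filter (fun i => ¬ (H1 i o = 1))).card : ℝ) := by
      linarith
    have heq : P.card = (Finset.univ.filter (fun i => ¬ (H1 i o = 1))).card :=
      Nat.cast_injective hcast
    omega
  -- build the row permutation
  set p : Fin n → Prop := fun i => (i : ℕ) < m with hp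
  set q : Fin n → Prop := fun i => H1 i o = 1 with hq
  have hcardp : Fintype.card {i // p i} = m := by
    rw [Fintype.card_subtype]
    exact card_filter_lt_fin hmn
  have hcardq : Fintype.card {i // q i} = m := by
    rw [Fintype.card_subtype]
    exact hcardP
  have hcardpc : Fintype.card {i // ¬ p i} = m := by
    rw [Fintype.card_subtype_compl, hcardp]
    simp; omega
  have hcardqc : Fintype.card {i // ¬ q i} = m := by
    rw [Fintype.card_subtype_compl, hcardq]
    simp; omega
  set e : {i // p i} ≃ {i // q i} := Fintype.equivOfCardEq (by rw [hcardp, hcardq]) with he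
  set σ : Equiv.Perm (Fin n) := e.extendSubtype with hσ
  have hσq : ∀ i, p i → H1 (σ i) o = 1 := fun i hi => e.extendSubtype_mem i hi
  have hσnq : ∀ i, ¬ p i → H1 (σ i) o = -1 := by
    intro i hi
    have hnq : ¬ q (σ i) := e.extendSubtype_not_mem i hi
    rcases hH1pm (σ i) o with h | h
    · exact absurd h hnq
    · exact h
  -- the final Hadamard matrix
  set M : Matrix (Fin n) (Fin n) ℝ := Matrix.of (fun i j => H1 (σ i) j) with hM
  have hMpm : ∀ i j, M i j = 1 ∨ M i j = -1 := fun i j => hH1pm (σ i) j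
  have hMorth : Mᵀ * M = (n : ℝ) • 1 := by
    rw [← hH1orth]
    ext j k
    simp only [Matrix.mul_apply, Matrix.transpose_apply, hM, Matrix.of_apply]
    exact Fintype.sum_equiv σ _ _ (fun i => rfl)
  have hMz : ∀ i, M i z = 1 := fun i => hcol0 (σ i)
  have hMo : ∀ i, M i o = if (i : ℕ) < m then 1 else -1 := by
    intro i
    by_cases hi : (i : ℕ) < m
    · rw [if_pos hi]; exact hσq i hi
    · rw [if_neg hi]; exact hσnq i hi
  have hnR : (n : ℝ) ≠ 0 := by positivity
  -- M * Mᵀ = n • 1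
  have hMMt : M * Mᵀ = (n : ℝ) • 1 := by
    have h1 : ((n : ℝ)⁻¹ • Mᵀ) * M = 1 := by
      rw [Matrix.smul_mul, hMorth, smul_smul, inv_mul_cancel₀ hnR, one_smul]
    have h2 : M * ((n : ℝ)⁻¹ • Mᵀ) = 1 := mul_eq_one_comm.mpr h1
    calc M * Mᵀ = (n : ℝ) • (M * ((n : ℝ)⁻¹ • Mᵀ)) := by
          rw [Matrix.mul_smul, smul_smul, mul_inv_cancel₀ hnR, one_smul]
      _ = (n : ℝ) • 1 := by rw [h2]
  set Λ : Fin n → ℝ := fun j => if j = z then 0 else if j = o then (n : ℝ) else (n : ℝ)/2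
    with hΛ
  refine ⟨M, Λ, ⟨hMpm, hMorth⟩, ?_⟩
  have hΛsplit : ∀ j, Λ j = (n : ℝ)/2 + (if j = z then -((n : ℝ)/2) else 0)
      + (if j = o then (n : ℝ)/2 else 0) := by
    intro j
    simp only [hΛ]
    by_cases h1 : j = z
    · rw [if_pos h1, if_pos h1, if_neg (by rw [h1]; exact hzo)]
      ring
    · rw [if_neg h1, if_neg h1]
      by_cases h2 : j = o
      · rw [if_pos h2, if_pos h2]; ring
      · rw [if_neg h2, if_neg h2]; ring
  ext i k
  -- RHS entry
  have hsum : ∑ j, M i j * Λ j * M k j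
      = (n : ℝ)/2 * ((M * Mᵀ) i k) - (n : ℝ)/2 * (M i z * M k z)
        + (n : ℝ)/2 * (M i o * M k o) := by
    have step : ∀ j : Fin n, M i j * Λ j * M k j
        = (n : ℝ)/2 * (M i j * M k j)
          + (if j = z then -((n : ℝ)/2) * (M i j * M k j) else 0)
          + (if j = o then (n : ℝ)/2 * (M i j * M k j) else 0) := by
      intro j
      rw [hΛsplit j]
      split_ifs <;> ring
    rw [Finset.sum_congr rfl (fun j _ => step j)]
    rw [Finset.sum_add_distrib, Finset.sum_add_distrib, ← Finset.mul_sum]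
    simp only [Finset.sum_ite_eq', Finset.mem_univ, if_true]
    have : (M * Mᵀ) i k = ∑ j, M i j * M k j := by
      simp [Matrix.mul_apply, Matrix.transpose_apply]
    rw [this]
    ring
  have hRHS : ((n : ℝ)⁻¹ • (M * Matrix.diagonal Λ * Mᵀ)) i k
      = (n : ℝ)⁻¹ * ∑ j, M i j * Λ j * M k j := by
    rw [Matrix.smul_apply, smul_eq_mul]
    congr 1
    rw [Matrix.mul_apply]
    refine Finset.sum_congr rfl fun j _ => ?_
    rw [Matrix.mul_diagonal, Matrix.transpose_apply]
  -- LHS entry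
  have hAdj : ∀ u v : Fin n, (completeBipartiteHalf n).Adj u v
      ↔ ¬ (((u : ℕ) < m) ↔ ((v : ℕ) < m)) := by
    intro u v
    simp [completeBipartiteHalf, hn2]
  have hdeg : (completeBipartiteHalf n).degree i = m := by
    rw [← SimpleGraph.card_neighborFinset_eq_degree, SimpleGraph.neighborFinset_eq_filter]
    by_cases hi : (i : ℕ) < m
    · have hset : Finset.univ.filter ((completeBipartiteHalf n).Adj i)
          = Finset.univ.filter (fun v : Fin n => ¬ ((v : ℕ) < m)) := by
        ext v
        simp only [Finset.mem_filter, Finset.mem_univ, true_and, hAdj i v]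
        constructor
        · intro h hv; exact h ⟨fun _ => hv, fun _ => hi⟩
        · intro h h'; exact h (h'.mp hi)
      rw [hset]
      have h2 := Finset.card_filter_add_card_filter_not
        (s := (Finset.univ : Finset (Fin n))) (p := fun v : Fin n => (v : ℕ) < m)
      have h3 := card_filter_lt_fin (n := n) hmn
      simp only [Finset.card_univ, Fintype.card_fin] at h2
      omega
    · have hset : Finset.univ.filter ((completeBipartiteHalf n).Adj i)
          = Finset.univ.filter (fun v : Fin n => (v : ℕ) < m) := by
        ext v
        simp only [Finset.mem_filter, Finset.mem_univ, true_and, hAdj i v]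
        constructor
        · intro h
          by_contra hv
          exact h ⟨fun h'' => absurd h'' hi, fun h'' => absurd h'' hv⟩
        · intro h h'
          exact hi (h'.mpr h)
      rw [hset]
      exact card_filter_lt_fin hmn
  have hLHS : lap (completeBipartiteHalf n) i k
      = (if i = k then (m : ℝ) else 0)
        - (if (((i : ℕ) < m) ↔ ((k : ℕ) < m)) then 0 else 1) := by
    simp only [lap, SimpleGraph.lapMatrix, SimpleGraph.degMatrix, SimpleGraph.adjMatrix,
      Matrix.sub_apply, Matrix.diagonal_apply, Matrix.of_apply]
    rw [hdeg]
    congr 1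
    by_cases h : (completeBipartiteHalf n).Adj i k
    · rw [if_pos h, if_neg ((hAdj i k).mp h)]
    · rw [if_neg h, if_pos (not_not.mp (fun hc => h ((hAdj i k).mpr hc)))]
  rw [hLHS, hRHS, hsum, hMMt, hMz, hMz, hMo, hMo]
  have hnm : (n : ℝ) = 2 * m := by exact_mod_cast congrArg (Nat.cast : ℕ → ℝ) hm2
  simp only [Matrix.smul_apply, Matrix.one_apply, smul_eq_mul]
  by_cases hik : i = k
  · subst hik
    rw [if_pos rfl, if_pos rfl, if_pos Iff.rfl]
    by_cases hi : (i : ℕ) < m <;> simp [hi] <;> field_simp <;> linarith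
  · rw [if_neg hik, if_neg hik]
    by_cases hi : (i : ℕ) < m <;> by_cases hk : (k : ℕ) < m
    · rw [if_pos (by tauto)]; simp [hi, hk] <;> field_simp <;> ring
    · rw [if_neg (by tauto)]; simp [hi, hk] <;> field_simp <;> ring
    · rw [if_neg (by tauto)]; simp [hi, hk] <;> field_simp <;> ring
    · rw [if_pos (by tauto)]; simp [hi, hk] <;> field_simp <;> ring
end

section
/- Let H be a normalized Hadamard matrix of order n, written in block form with first row and first column all ones and Ĥ the lower-right (n-1)×(n-1) block. Then (1/n)Ĥ is invertible with inverse Ĥ^T − J, where J is the (n-1)×(n-1) all-ones matrix. -/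
open Matrix

theorem normalized_hadamard_block_inverse {n : ℕ}
    (H : Matrix (Fin (n + 1)) (Fin (n + 1)) ℝ) (hH : IsHadamardMatrix H)
    (hrow : ∀ j, H 0 j = 1) (hcol : ∀ i, H i 0 = 1) :
    (((n + 1 : ℝ))⁻¹ • (Matrix.of fun i j : Fin n => H i.succ j.succ)) *
        ((Matrix.of fun i j : Fin n => H i.succ j.succ)ᵀ -
          Matrix.of fun _ _ : Fin n => (1 : ℝ)) = 1 ∧
    ((Matrix.of fun i j : Fin n => H i.succ j.succ)ᵀ -
          Matrix.of fun _ _ : Fin n => (1 : ℝ)) *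
        (((n + 1 : ℝ))⁻¹ • (Matrix.of fun i j : Fin n => H i.succ j.succ)) = 1 := by
  obtain ⟨hent, horth⟩ := hH
  have hc : (n + 1 : ℝ) ≠ 0 := by positivity
  have horth' : Hᵀ * H = (n + 1 : ℝ) • 1 := by
    rw [horth]; norm_cast
  have hmul : H * Hᵀ = (n + 1 : ℝ) • 1 := by
    have h2 : ((n + 1 : ℝ)⁻¹ • Hᵀ) * H = 1 := by
      rw [Matrix.smul_mul, horth', smul_smul, inv_mul_cancel₀ hc, one_smul]
    have h3 := mul_eq_one_comm.mp h2
    calc H * Hᵀ = (n + 1 : ℝ) • (H * ((n + 1 : ℝ)⁻¹ • Hᵀ)) := by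
          rw [Matrix.mul_smul, smul_smul, mul_inv_cancel₀ hc, one_smul]
      _ = (n + 1 : ℝ) • 1 := by rw [h3]
      _ = _ := by simp
  have hsum1 : ∀ i j : Fin (n + 1),
      ∑ k, H i k * H j k = if i = j then (n + 1 : ℝ) else 0 := by
    intro i j
    have := congrFun (congrFun hmul i) j
    simpa [Matrix.mul_apply, Matrix.one_apply, Matrix.smul_apply, mul_ite,
      mul_one, mul_zero] using this
  have hsum2 : ∀ i j : Fin (n + 1),
      ∑ k, H k i * H k j = if i = j then (n + 1 : ℝ) else 0 := by
    intro i j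
    have := congrFun (congrFun horth' i) j
    simpa [Matrix.mul_apply, Matrix.one_apply, Matrix.smul_apply, mul_ite,
      mul_one, mul_zero] using this
  have hrs : ∀ i : Fin n, ∑ k : Fin n, H i.succ k.succ = -1 := by
    intro i
    have h := hsum1 i.succ 0
    simp only [hrow, mul_one] at h
    rw [Fin.sum_univ_succ] at h
    rw [if_neg (Fin.succ_ne_zero i)] at h
    rw [hcol] at h
    linarith
  have hcs : ∀ j : Fin n, ∑ k : Fin n, H k.succ j.succ = -1 := by
    intro j
    have h := hsum2 0 j.succ
    simp only [hcol, one_mul] at h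
    rw [Fin.sum_univ_succ] at h
    rw [if_neg (Fin.succ_ne_zero j).symm] at h
    rw [hrow] at h
    linarith
  have hip1 : ∀ i j : Fin n,
      ∑ k : Fin n, H i.succ k.succ * H j.succ k.succ
        = (if i = j then (n + 1 : ℝ) else 0) - 1 := by
    intro i j
    have h := hsum1 i.succ j.succ
    rw [Fin.sum_univ_succ, hcol, hcol, one_mul] at h
    simp only [Fin.succ_inj] at h
    linarith
  have hip2 : ∀ i j : Fin n,
      ∑ k : Fin n, H k.succ i.succ * H k.succ j.succ
        = (if i = j then (n + 1 : ℝ) else 0) - 1 := by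
    intro i j
    have h := hsum2 i.succ j.succ
    rw [Fin.sum_univ_succ, hrow, hrow, one_mul] at h
    simp only [Fin.succ_inj] at h
    linarith
  constructor
  · rw [Matrix.smul_mul]
    ext i j
    simp only [Matrix.smul_apply, Matrix.mul_apply, Matrix.sub_apply,
      Matrix.transpose_apply, Matrix.of_apply, mul_sub, mul_one,
      Finset.sum_sub_distrib, hip1 i j, hrs i, Matrix.one_apply, smul_eq_mul]
    split_ifs <;> field_simp <;> ring
  · rw [Matrix.mul_smul]
    ext i j
    simp only [Matrix.smul_apply, Matrix.mul_apply, Matrix.sub_apply,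
      Matrix.transpose_apply, Matrix.of_apply, sub_mul, one_mul,
      Finset.sum_sub_distrib, hip2 i j, hcs j, Matrix.one_apply, smul_eq_mul]
    split_ifs <;> field_simp <;> ring
end

section
/- Let G be a Hadamard diagonalizable graph with Laplacian L, diagonalized by a normalized Hadamard matrix H with eigenvalues λ_1 = 0, λ_2, ..., λ_n corresponding to the columns of H. Then the vector (λ_2, ..., λ_n) is uniquely determined by the first-row entries L_{12}, ..., L_{1n}; explicitly, (λ_2,...,λ_n)^T = (Ĥ^T − J)(L_{12},...,L_{1n})^T where Ĥ is H with first row and column deleted and J is the all-ones matrix. -/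
open Matrix

theorem eigenvalues_determined_by_first_row {n : ℕ} (G : SimpleGraph (Fin (n + 1)))
    (H : Matrix (Fin (n + 1)) (Fin (n + 1)) ℝ) (hH : IsHadamardMatrix H)
    (hrow : ∀ j, H 0 j = 1) (hcol : ∀ i, H i 0 = 1)
    (Λ : Fin (n + 1) → ℝ) (hΛ0 : Λ 0 = 0)
    (hdiag : lap G = ((n + 1 : ℝ))⁻¹ • (H * Matrix.diagonal Λ * Hᵀ)) :
    ∀ i : Fin n, Λ i.succ = ∑ j : Fin n, (H j.succ i.succ - 1) * lap G 0 j.succ := by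
  classical
  intro i
  have hne : ((n : ℝ) + 1) ≠ 0 := by positivity
  -- key : Hᵀ * L = D * Hᵀ
  have key : Hᵀ * lap G = Matrix.diagonal Λ * Hᵀ := by
    rw [hdiag, Matrix.mul_smul, ← Matrix.mul_assoc, ← Matrix.mul_assoc, hH.2]
    push_cast
    rw [Matrix.smul_mul, Matrix.smul_mul, Matrix.one_mul, smul_smul,
      inv_mul_cancel₀ hne, one_smul]
  -- entrywise at (i.succ, 0)
  have hsym : ∀ a b, lap G a b = lap G b a := by
    intro a b
    exact congrFun (congrFun (G.isSymm_lapMatrix (R := ℝ)).symm a) b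
  have hrowsum : ∑ j, lap G 0 j = 0 := by
    have := congrFun (G.lapMatrix_mulVec_const_eq_zero (R := ℝ)) 0
    simpa [Matrix.mulVec, dotProduct, lap] using this
  have h1 : ∑ j, H j i.succ * lap G 0 j = Λ i.succ := by
    have := congrFun (congrFun key i.succ) 0
    simp only [Matrix.mul_apply, Matrix.transpose_apply, Matrix.diagonal_apply, ite_mul,
      zero_mul, Finset.sum_ite_eq, Finset.mem_univ, if_true] at this
    calc ∑ j, H j i.succ * lap G 0 j = ∑ j, H j i.succ * lap G j 0 := by
          simp_rw [hsym 0]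
      _ = Λ i.succ * H 0 i.succ := this
      _ = Λ i.succ := by rw [hrow i.succ, mul_one]
  have h2 : ∑ j : Fin (n+1), (H j i.succ - 1) * lap G 0 j = Λ i.succ := by
    simp only [sub_mul, one_mul, Finset.sum_sub_distrib, h1, hrowsum, sub_zero]
  rw [← h2, Fin.sum_univ_succ, hrow i.succ, sub_self, zero_mul, zero_add]
end

section
/- If G₁ and G₂ are Hadamard diagonalizable graphs, then the lexicographic product G₁ ≀ G₂ is Hadamard diagonalizable; moreover, if H₁ diagonalizes G₁ and H₂ diagonalizes G₂ (both normalized), then the Kronecker product H₁ ⊗ H₂ diagonalizes G₁ ≀ G₂. -/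
open Matrix

/-- A Hadamard matrix indexed by an arbitrary finite type. -/
def IsHadamardMatrixGen {ι : Type*} [Fintype ι] [DecidableEq ι]
    (H : Matrix ι ι ℝ) : Prop :=
  (∀ i j, H i j = 1 ∨ H i j = -1) ∧ Hᵀ * H = (Fintype.card ι : ℝ) • 1

/-- The lexicographic product `G₁ ≀ G₂`. -/
def lexProd {α β : Type*} (G₁ : SimpleGraph α) (G₂ : SimpleGraph β) :
    SimpleGraph (α × β) where
  Adj p q := G₁.Adj p.1 q.1 ∨ (p.1 = q.1 ∧ G₂.Adj p.2 q.2)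
  symm := by
    constructor
    rintro p q (h | ⟨h1, h2⟩)
    · exact Or.inl h.symm
    · exact Or.inr ⟨h1.symm, h2.symm⟩
  loopless := by
    constructor
    rintro p (h | ⟨h1, h2⟩)
    · exact G₁.irrefl h
    · exact G₂.irrefl h2

open scoped Classical in
noncomputable def lapP {m n : ℕ} (G : SimpleGraph (Fin m × Fin n)) :
    Matrix (Fin m × Fin n) (Fin m × Fin n) ℝ :=
  G.lapMatrix ℝ

section Aux

open scoped Classical

lemma hadamard_mul_transpose {k : ℕ} (hk : 0 < k) (H : Matrix (Fin k) (Fin k) ℝ)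
    (h : Hᵀ * H = (k : ℝ) • 1) : H * Hᵀ = (k : ℝ) • 1 := by
  have hk' : (k : ℝ) ≠ 0 := Nat.cast_ne_zero.mpr hk.ne'
  have h1 : ((k:ℝ)⁻¹ • Hᵀ) * H = 1 := by
    rw [Matrix.smul_mul, h, smul_smul, inv_mul_cancel₀ hk', one_smul]
  have h2 : H * ((k:ℝ)⁻¹ • Hᵀ) = 1 := mul_eq_one_comm.mp h1
  rw [Matrix.mul_smul] at h2
  calc H * Hᵀ = (k:ℝ) • ((k:ℝ)⁻¹ • (H * Hᵀ)) := by
        rw [smul_smul, mul_inv_cancel₀ hk', one_smul]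
    _ = (k:ℝ) • 1 := by rw [h2]

lemma hdh_entry {k : ℕ} (H : Matrix (Fin k) (Fin k) ℝ) (d : Fin k → ℝ) (i j : Fin k) :
    (H * Matrix.diagonal d * Hᵀ) i j = ∑ l, H i l * d l * H j l := by
  rw [Matrix.mul_apply]
  simp only [Matrix.mul_diagonal, Matrix.transpose_apply]

lemma lapMatrix_entry {V : Type*} [Fintype V] [DecidableEq V] (G : SimpleGraph V)
    [DecidableRel G.Adj] (i j : V) :
    G.lapMatrix ℝ i j = (if i = j then (G.degree i : ℝ) else 0)
      - (if G.Adj i j then 1 else 0) := by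
  simp [SimpleGraph.lapMatrix, SimpleGraph.degMatrix, Matrix.sub_apply,
    Matrix.diagonal_apply, SimpleGraph.adjMatrix_apply]

lemma degree_cast {V : Type*} [Fintype V] (G : SimpleGraph V) (v : V) :
    (G.degree v : ℝ) = ∑ w, if G.Adj v w then (1:ℝ) else 0 := by
  classical
  rw [SimpleGraph.degree, SimpleGraph.neighborFinset_eq_filter, Finset.card_filter]
  push_cast
  simp [apply_ite]

lemma degree_lexProd {m n : ℕ} (G₁ : SimpleGraph (Fin m)) (G₂ : SimpleGraph (Fin n))
    (u : Fin m) (x : Fin n) :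
    (((lexProd G₁ G₂).degree (u, x)) : ℝ) = n * G₁.degree u + G₂.degree x := by
  rw [degree_cast, degree_cast, degree_cast, Fintype.sum_prod_type]
  have key : ∀ (v : Fin m) (y : Fin n),
      (if (lexProd G₁ G₂).Adj (u,x) (v,y) then (1:ℝ) else 0)
        = (if G₁.Adj u v then 1 else 0)
          + (if u = v then 1 else 0) * (if G₂.Adj x y then 1 else 0) := by
    intro v y
    by_cases h1 : G₁.Adj u v
    · have hne : u ≠ v := h1.ne
      simp [lexProd, h1, hne]
    · by_cases h2 : u = v
      · by_cases h3 : G₂.Adj x y <;> simp [lexProd, h1, h2, h3]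
      · simp [lexProd, h1, h2]
  simp_rw [key]
  have step : ∀ v : Fin m,
      (∑ y : Fin n, ((if G₁.Adj u v then (1:ℝ) else 0)
          + (if u = v then 1 else 0) * (if G₂.Adj x y then 1 else 0)))
        = (n : ℝ) * (if G₁.Adj u v then 1 else 0)
          + (if u = v then 1 else 0) * ∑ y, (if G₂.Adj x y then (1:ℝ) else 0) := by
    intro v
    rw [Finset.sum_add_distrib, Finset.sum_const, ← Finset.mul_sum]
    simp [nsmul_eq_mul]
  simp_rw [step]
  rw [Finset.sum_add_distrib, ← Finset.mul_sum]
  congr 1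
  simp [ite_mul]

end Aux

open Kronecker in
theorem lexProd_hadamardDiagonalizable {m n : ℕ} (hm : 0 < m) (hn : 0 < n)
    (G₁ : SimpleGraph (Fin m)) (G₂ : SimpleGraph (Fin n))
    (H₁ : Matrix (Fin m) (Fin m) ℝ) (H₂ : Matrix (Fin n) (Fin n) ℝ)
    (hH₁ : IsHadamardMatrix H₁) (hH₂ : IsHadamardMatrix H₂)
    (hn₁ : ∀ j, H₁ j ⟨0, hm⟩ = 1 ∧ H₁ ⟨0, hm⟩ j = 1)
    (hn₂ : ∀ j, H₂ j ⟨0, hn⟩ = 1 ∧ H₂ ⟨0, hn⟩ j = 1)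
    (Λ₁ : Fin m → ℝ) (Λ₂ : Fin n → ℝ)
    (hd₁ : lap G₁ = (m : ℝ)⁻¹ • (H₁ * Matrix.diagonal Λ₁ * H₁ᵀ))
    (hd₂ : lap G₂ = (n : ℝ)⁻¹ • (H₂ * Matrix.diagonal Λ₂ * H₂ᵀ)) :
    IsHadamardMatrixGen (H₁ ⊗ₖ H₂) ∧
    ∃ Λ : Fin m × Fin n → ℝ,
      lapP (lexProd G₁ G₂) =
        ((m : ℝ) * n)⁻¹ • ((H₁ ⊗ₖ H₂) * Matrix.diagonal Λ * (H₁ ⊗ₖ H₂)ᵀ) := by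
  classical
  obtain ⟨hE₁, hO₁⟩ := hH₁
  obtain ⟨hE₂, hO₂⟩ := hH₂
  have hm' : (m:ℝ) ≠ 0 := Nat.cast_ne_zero.mpr hm.ne'
  have hn' : (n:ℝ) ≠ 0 := Nat.cast_ne_zero.mpr hn.ne'
  have hkt : (H₁ ⊗ₖ H₂)ᵀ = H₁ᵀ ⊗ₖ H₂ᵀ := (Matrix.kroneckerMap_transpose _ _ _).symm
  constructor
  · constructor
    · intro p q
      rcases hE₁ p.1 q.1 with h1|h1 <;> rcases hE₂ p.2 q.2 with h2|h2 <;>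
        simp [Matrix.kroneckerMap_apply, h1, h2]
    · rw [hkt, ← Matrix.mul_kronecker_mul, hO₁, hO₂, Matrix.smul_kronecker,
        Matrix.kronecker_smul, Matrix.one_kronecker_one, smul_smul]
      congr 1
      simp [Fintype.card_prod]
  · -- main part
    set z₀ : Fin n := ⟨0, hn⟩
    set r₁ : ℝ := (m:ℝ)⁻¹ * ∑ k, Λ₁ k with hr₁
    have h11 : H₁ * H₁ᵀ = (m:ℝ) • 1 := hadamard_mul_transpose hm H₁ hO₁
    have h22 : H₂ * H₂ᵀ = (n:ℝ) • 1 := hadamard_mul_transpose hn H₂ hO₂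
    set J : Matrix (Fin n) (Fin n) ℝ := Matrix.of (fun _ _ => (1:ℝ)) with hJdef
    have hL1 : H₁ * Matrix.diagonal Λ₁ * H₁ᵀ = (m:ℝ) • lap G₁ := by
      rw [hd₁, smul_smul, mul_inv_cancel₀ hm', one_smul]
    have hL2 : H₂ * Matrix.diagonal Λ₂ * H₂ᵀ = (n:ℝ) • lap G₂ := by
      rw [hd₂, smul_smul, mul_inv_cancel₀ hn', one_smul]
    have hJ : H₂ * Matrix.diagonal (fun x => if x = z₀ then (n:ℝ) else 0) * H₂ᵀ
        = (n:ℝ) • J := by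
      ext i j
      rw [hdh_entry]
      rw [Finset.sum_eq_single z₀]
      · simp [(hn₂ i).1, (hn₂ j).1, hJdef]
      · intro b _ hb; simp [hb]
      · intro h; exact absurd (Finset.mem_univ _) h
    have hlapdiag : ∀ {k : ℕ} (G : SimpleGraph (Fin k)) (i : Fin k),
        G.lapMatrix ℝ i i = (G.degree i : ℝ) := by
      intro k G i
      rw [lapMatrix_entry]
      simp [G.irrefl]
    have hreg : ∀ u, (G₁.degree u : ℝ) = r₁ := by
      intro u
      have := congrFun (congrFun hd₁ u) u
      rw [lap] at this
      rw [← hlapdiag G₁ u, this]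
      simp only [Matrix.smul_apply, hdh_entry, smul_eq_mul]
      rw [hr₁]
      congr 1
      refine Finset.sum_congr rfl fun l _ => ?_
      rcases hE₁ u l with h|h <;> rw [h] <;> ring
    -- structural identity for the Laplacian of the lexicographic product
    have key : lapP (lexProd G₁ G₂)
        = (1 : Matrix (Fin m) (Fin m) ℝ) ⊗ₖ lap G₂ + lap G₁ ⊗ₖ J
          + r₁ • ((1 : Matrix (Fin m) (Fin m) ℝ) ⊗ₖ
              ((n:ℝ) • (1 : Matrix (Fin n) (Fin n) ℝ) - J)) := by
      ext ⟨u, x⟩ ⟨v, y⟩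
      rw [lapP, lapMatrix_entry]
      simp only [Matrix.add_apply, Matrix.smul_apply, Matrix.kroneckerMap_apply,
        Matrix.sub_apply, Matrix.smul_apply, Matrix.one_apply, Matrix.of_apply,
        smul_eq_mul, hJdef, lap, lapMatrix_entry]
      by_cases huv : u = v
      · subst huv
        by_cases hxy : x = y
        · subst hxy
          have hadj : ¬ (lexProd G₁ G₂).Adj (u, x) (u, x) := (lexProd G₁ G₂).irrefl
          simp only [Prod.mk.injEq, true_and, if_true, hadj, if_false, if_pos rfl,
            G₁.irrefl, G₂.irrefl]
          rw [degree_lexProd, hreg u]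
          push_cast
          ring
        · have hadj : (lexProd G₁ G₂).Adj (u, x) (u, y) ↔ G₂.Adj x y := by
            simp [lexProd, G₁.irrefl]
          have hne : ¬ ((u, x) = (u, y)) := by simp [hxy]
          simp only [hne, if_false, hxy, if_pos rfl, G₁.irrefl, hadj, hreg u]
          by_cases h3 : G₂.Adj x y <;> simp [h3] <;> ring
      · have hadj : (lexProd G₁ G₂).Adj (u, x) (v, y) ↔ G₁.Adj u v := by
          simp [lexProd, huv]
        have hne : ¬ ((u, x) = (v, y)) := by simp [huv]
        simp only [hne, if_false, huv, hadj]
        by_cases h1 : G₁.Adj u v <;> simp [h1]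
    refine ⟨fun p => Λ₂ p.2 + (if p.2 = z₀ then (n:ℝ) * Λ₁ p.1 else (n:ℝ) * r₁), ?_⟩
    have hdiag : Matrix.diagonal
        (fun p : Fin m × Fin n => Λ₂ p.2 + (if p.2 = z₀ then (n:ℝ) * Λ₁ p.1 else (n:ℝ) * r₁))
        = (Matrix.diagonal (fun _ : Fin m => (1:ℝ)) ⊗ₖ Matrix.diagonal Λ₂)
          + (Matrix.diagonal Λ₁ ⊗ₖ Matrix.diagonal (fun x => if x = z₀ then (n:ℝ) else 0))
          + (Matrix.diagonal (fun _ : Fin m => r₁)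
              ⊗ₖ Matrix.diagonal (fun x : Fin n => (n:ℝ) - (if x = z₀ then (n:ℝ) else 0))) := by
      rw [Matrix.diagonal_kronecker_diagonal, Matrix.diagonal_kronecker_diagonal,
        Matrix.diagonal_kronecker_diagonal]
      ext p q
      simp only [Matrix.add_apply, Matrix.diagonal_apply]
      by_cases hpq : p = q
      · subst hpq
        by_cases h : p.2 = z₀ <;> simp [h] <;> ring
      · simp [hpq]
    rw [key, hkt, hdiag]
    rw [Matrix.mul_add, Matrix.mul_add, Matrix.add_mul, Matrix.add_mul]
    simp only [← Matrix.mul_kronecker_mul]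
    rw [Matrix.diagonal_one]
    have e1 : H₁ * 1 * H₁ᵀ = (m:ℝ) • 1 := by rw [Matrix.mul_one]; exact h11
    have e3a : H₁ * Matrix.diagonal (fun _ : Fin m => r₁) * H₁ᵀ = ((m:ℝ) * r₁) • 1 := by
      have hco : Matrix.diagonal (fun _ : Fin m => r₁) = r₁ • (1 : Matrix (Fin m) (Fin m) ℝ) := by
        ext i j
        by_cases hij : i = j <;> simp [Matrix.diagonal_apply, Matrix.one_apply, hij]
      rw [hco, Matrix.mul_smul, Matrix.smul_mul, e1, smul_smul, mul_comm]
    have e3b : H₂ * Matrix.diagonal (fun x : Fin n => (n:ℝ) - (if x = z₀ then (n:ℝ) else 0)) * H₂ᵀ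
        = (n:ℝ) • ((n:ℝ) • (1 : Matrix (Fin n) (Fin n) ℝ) - J) := by
      have hsplit : Matrix.diagonal (fun x : Fin n => (n:ℝ) - (if x = z₀ then (n:ℝ) else 0))
          = (n:ℝ) • (1 : Matrix (Fin n) (Fin n) ℝ)
            - Matrix.diagonal (fun x => if x = z₀ then (n:ℝ) else 0) := by
        ext x y
        by_cases hxy : x = y <;> simp [Matrix.diagonal_apply, Matrix.one_apply, hxy]
      rw [hsplit, Matrix.mul_sub, Matrix.sub_mul, Matrix.mul_smul, Matrix.smul_mul,
        Matrix.mul_one, h22, hJ, smul_sub]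
    rw [e1, e3a, e3b, hL1, hL2, hJ]
    rw [Matrix.smul_kronecker, Matrix.kronecker_smul, Matrix.smul_kronecker,
      Matrix.kronecker_smul, Matrix.smul_kronecker, Matrix.kronecker_smul]
    rw [smul_add, smul_add, smul_smul, smul_smul, smul_smul, smul_smul, smul_smul, smul_smul]
    have c1 : ((m:ℝ) * n)⁻¹ * (m:ℝ) * (n:ℝ) = 1 := by
      field_simp
    have c2 : ((m:ℝ) * n)⁻¹ * ((m:ℝ) * r₁) * (n:ℝ) = r₁ := by
      field_simp
    rw [c1, c2]
    simp only [one_smul]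
end

section
/- If G₁ and G₂ are Hadamard diagonalizable graphs, then their Cartesian product G₁ □ G₂ is Hadamard diagonalizable, diagonalized by the Kronecker product H₁ ⊗ H₂ of diagonalizing Hadamard matrices of G₁ and G₂. -/
open Matrix

open Kronecker in
open scoped Classical in
theorem lap_boxProd {m n : ℕ} (G₁ : SimpleGraph (Fin m)) (G₂ : SimpleGraph (Fin n)) :
    lapP (G₁ □ G₂) =
      (lap G₁) ⊗ₖ (1 : Matrix (Fin n) (Fin n) ℝ) +
      (1 : Matrix (Fin m) (Fin m) ℝ) ⊗ₖ (lap G₂) := by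
  unfold lapP lap
  ext ⟨a, b⟩ ⟨c, d⟩
  simp only [SimpleGraph.lapMatrix, Matrix.sub_apply, SimpleGraph.degMatrix,
    SimpleGraph.adjMatrix_apply, Matrix.diagonal_apply, Matrix.add_apply,
    Matrix.kroneckerMap_apply, Matrix.one_apply, SimpleGraph.boxProd_adj]
  by_cases hac : a = c <;> by_cases hbd : b = d
  · subst hac; subst hbd
    simp only [if_true, if_false, if_pos rfl, SimpleGraph.irrefl, false_and, and_false,
      and_true, true_and, false_or, or_false, if_neg (G₁.irrefl), if_neg (G₂.irrefl)]
    rw [SimpleGraph.degree_eq_sum_if_adj (R := ℝ), SimpleGraph.degree_eq_sum_if_adj (R := ℝ),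
      SimpleGraph.degree_eq_sum_if_adj (R := ℝ)]
    have hsplit : ∀ (c : Fin m) (d : Fin n),
        (if (G₁ □ G₂).Adj (a, b) (c, d) then (1 : ℝ) else 0) =
          (if G₁.Adj a c ∧ b = d then 1 else 0) + (if a = c ∧ G₂.Adj b d then 1 else 0) := by
      intro c d
      by_cases h1 : G₁.Adj a c ∧ b = d
      · have h2 : ¬(a = c ∧ G₂.Adj b d) := fun h => absurd (h.1 ▸ h1.1) G₁.irrefl
        simp [SimpleGraph.boxProd_adj, h1, h2]
      · by_cases h2 : a = c ∧ G₂.Adj b d <;> simp [SimpleGraph.boxProd_adj, h1, h2] <;> tauto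
    rw [Fintype.sum_prod_type]
    simp_rw [hsplit, Finset.sum_add_distrib]
    simp [ite_and, Finset.sum_ite_eq, Finset.sum_ite_eq']
  · simp [Prod.ext_iff, hac, hbd]
  · simp [Prod.ext_iff, hac, hbd]
  · simp [Prod.ext_iff, hac, hbd]

lemma hadamard_self_mul_transpose {k : ℕ} (hk : (k : ℝ) ≠ 0)
    {H : Matrix (Fin k) (Fin k) ℝ} (hH : Hᵀ * H = (k : ℝ) • 1) :
    H * Hᵀ = (k : ℝ) • 1 := by
  have h1 : ((k : ℝ)⁻¹ • Hᵀ) * H = 1 := by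
    rw [Matrix.smul_mul, hH, smul_smul, inv_mul_cancel₀ hk, one_smul]
  have h2 : H * ((k : ℝ)⁻¹ • Hᵀ) = 1 := mul_eq_one_comm.mp h1
  calc H * Hᵀ = (k : ℝ) • (H * ((k : ℝ)⁻¹ • Hᵀ)) := by
        rw [Matrix.mul_smul, smul_smul, mul_inv_cancel₀ hk, one_smul]
    _ = (k : ℝ) • 1 := by rw [h2]

open Kronecker in
theorem boxProd_hadamardDiagonalizable {m n : ℕ}
    (G₁ : SimpleGraph (Fin m)) (G₂ : SimpleGraph (Fin n))
    (H₁ : Matrix (Fin m) (Fin m) ℝ) (H₂ : Matrix (Fin n) (Fin n) ℝ)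
    (hH₁ : IsHadamardMatrix H₁) (hH₂ : IsHadamardMatrix H₂)
    (Λ₁ : Fin m → ℝ) (Λ₂ : Fin n → ℝ)
    (hd₁ : lap G₁ = (m : ℝ)⁻¹ • (H₁ * Matrix.diagonal Λ₁ * H₁ᵀ))
    (hd₂ : lap G₂ = (n : ℝ)⁻¹ • (H₂ * Matrix.diagonal Λ₂ * H₂ᵀ)) :
    IsHadamardMatrixGen (H₁ ⊗ₖ H₂) ∧
    ∃ Λ : Fin m × Fin n → ℝ,
      lapP (G₁ □ G₂) =
        ((m : ℝ) * n)⁻¹ • ((H₁ ⊗ₖ H₂) * Matrix.diagonal Λ * (H₁ ⊗ₖ H₂)ᵀ) := by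
  obtain ⟨hH₁e, hH₁o⟩ := hH₁
  obtain ⟨hH₂e, hH₂o⟩ := hH₂
  constructor
  · constructor
    · rintro ⟨i₁, i₂⟩ ⟨j₁, j₂⟩
      rcases hH₁e i₁ j₁ with h1 | h1 <;> rcases hH₂e i₂ j₂ with h2 | h2 <;>
        simp [Matrix.kroneckerMap_apply, h1, h2]
    · rw [show (H₁ ⊗ₖ H₂)ᵀ = H₁ᵀ ⊗ₖ H₂ᵀ from (Matrix.kroneckerMap_transpose _ _ _).symm,
        ← Matrix.mul_kronecker_mul, hH₁o, hH₂o, Matrix.smul_kronecker,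
        Matrix.kronecker_smul, Matrix.one_kronecker_one, smul_smul]
      simp [Fintype.card_prod]
  · refine ⟨fun p => Λ₁ p.1 + Λ₂ p.2, ?_⟩
    rcases eq_or_ne m 0 with hm | hm
    · subst hm
      ext ⟨i, j⟩
      exact i.elim0
    rcases eq_or_ne n 0 with hn | hn
    · subst hn
      ext ⟨i, j⟩
      exact j.elim0
    have hm' : (m : ℝ) ≠ 0 := Nat.cast_ne_zero.mpr hm
    have hn' : (n : ℝ) ≠ 0 := Nat.cast_ne_zero.mpr hn
    have h1 : H₁ * H₁ᵀ = (m : ℝ) • 1 := hadamard_self_mul_transpose hm' hH₁o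
    have h2 : H₂ * H₂ᵀ = (n : ℝ) • 1 := hadamard_self_mul_transpose hn' hH₂o
    have hone₂ : (1 : Matrix (Fin n) (Fin n) ℝ) = (n : ℝ)⁻¹ • (H₂ * 1 * H₂ᵀ) := by
      rw [Matrix.mul_one, h2, smul_smul, inv_mul_cancel₀ hn', one_smul]
    have hone₁ : (1 : Matrix (Fin m) (Fin m) ℝ) = (m : ℝ)⁻¹ • (H₁ * 1 * H₁ᵀ) := by
      rw [Matrix.mul_one, h1, smul_smul, inv_mul_cancel₀ hm', one_smul]
    have hdiag : Matrix.diagonal (fun p : Fin m × Fin n => Λ₁ p.1 + Λ₂ p.2) =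
        (Matrix.diagonal Λ₁) ⊗ₖ (1 : Matrix (Fin n) (Fin n) ℝ) +
        (1 : Matrix (Fin m) (Fin m) ℝ) ⊗ₖ (Matrix.diagonal Λ₂) := by
      rw [show (1 : Matrix (Fin n) (Fin n) ℝ) = Matrix.diagonal (fun _ => (1 : ℝ)) from
          Matrix.diagonal_one.symm,
        show (1 : Matrix (Fin m) (Fin m) ℝ) = Matrix.diagonal (fun _ => (1 : ℝ)) from
          Matrix.diagonal_one.symm,
        Matrix.diagonal_kronecker_diagonal, Matrix.diagonal_kronecker_diagonal,
        Matrix.diagonal_add]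
      exact congrArg Matrix.diagonal (funext fun p => by ring)
    have hTk : (H₁ ⊗ₖ H₂)ᵀ = H₁ᵀ ⊗ₖ H₂ᵀ := (Matrix.kroneckerMap_transpose _ _ _).symm
    calc lapP (G₁ □ G₂)
        = (lap G₁) ⊗ₖ (1 : Matrix (Fin n) (Fin n) ℝ) +
          (1 : Matrix (Fin m) (Fin m) ℝ) ⊗ₖ (lap G₂) := lap_boxProd G₁ G₂
      _ = ((m : ℝ)⁻¹ • (H₁ * Matrix.diagonal Λ₁ * H₁ᵀ)) ⊗ₖ ((n : ℝ)⁻¹ • (H₂ * 1 * H₂ᵀ)) +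
          ((m : ℝ)⁻¹ • (H₁ * 1 * H₁ᵀ)) ⊗ₖ ((n : ℝ)⁻¹ • (H₂ * Matrix.diagonal Λ₂ * H₂ᵀ)) := by
          rw [hd₁, hd₂, ← hone₁, ← hone₂]
      _ = ((m : ℝ) * n)⁻¹ • ((H₁ ⊗ₖ H₂) * ((Matrix.diagonal Λ₁) ⊗ₖ (1 : Matrix (Fin n) (Fin n) ℝ)) * (H₁ ⊗ₖ H₂)ᵀ) +
          ((m : ℝ) * n)⁻¹ • ((H₁ ⊗ₖ H₂) * ((1 : Matrix (Fin m) (Fin m) ℝ) ⊗ₖ (Matrix.diagonal Λ₂)) * (H₁ ⊗ₖ H₂)ᵀ) := by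
          rw [Matrix.smul_kronecker, Matrix.kronecker_smul, Matrix.smul_kronecker,
            Matrix.kronecker_smul, smul_smul, smul_smul, ← mul_inv]
          congr 2
          · rw [hTk, ← Matrix.mul_kronecker_mul, ← Matrix.mul_kronecker_mul]
          · rw [hTk, ← Matrix.mul_kronecker_mul, ← Matrix.mul_kronecker_mul]
      _ = ((m : ℝ) * n)⁻¹ • ((H₁ ⊗ₖ H₂) * Matrix.diagonal (fun p : Fin m × Fin n => Λ₁ p.1 + Λ₂ p.2) * (H₁ ⊗ₖ H₂)ᵀ) := by
          rw [hdiag, Matrix.mul_add, Matrix.add_mul, smul_add]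
end
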